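/- Sharpness of the phase transition, mean-field lower bound: For Bernoulli bond percolation on ℤ^d (d ≥ 1), there exists c > 0 such that for every p > p_c, ℙ_p[0 ↔ ∞] ≥ c (p − p_c). -/

import Mathlib

open scoped Classical

section Percolation

/-!  Bernoulli bond percolation on `ℤ^d`.

Vertices are points of `ℤ^d` (functions `Fin d → ℤ`).  An edge of the lattice joins two
vertices at Euclidean distance 1; we encode the edge `{x, x + eᵢ}` (where `eᵢ` is the
`i`-th unit vector) by the pair `(x, i)`, which gives a bijective encoding of the edge
set `𝔼^d`.  A percolation configuration assigns a Boolean (open/closed) to every edge.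

Probabilities of events depending on finitely many edges are expressed as the
corresponding finite sums of Bernoulli(`p`) product weights; probabilities of
increasing/decreasing limits of such events (`0 ↔ ∞`, existence of an infinite cluster)
are expressed as the corresponding monotone limits (`⨅`/`⨆`) of finite-volume
probabilities, which is how they are obtained from continuity of probability measures. -/

/-- A vertex of `ℤ^d`. -/
abbrev PVert (d : ℕ) := Fin d → ℤ

/-- An edge of `ℤ^d`: the pair `(x, i)` encodes the edge `{x, x + eᵢ}`. -/
abbrev PEdge (d : ℕ) := (Fin d → ℤ) × Fin d

/-- The `i`-th unit vector of `ℤ^d`. -/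
def unitVec (d : ℕ) (i : Fin d) : PVert d := fun j => if j = i then 1 else 0

/-- A percolation configuration: each edge is open (`true`) or closed (`false`). -/
abbrev PConfig (d : ℕ) := PEdge d → Bool

/-- `x` and `y` are joined by an open edge of `ω`. -/
def openAdj {d : ℕ} (ω : PConfig d) (x y : PVert d) : Prop :=
  ∃ i : Fin d, (y = x + unitVec d i ∧ ω (x, i) = true) ∨
               (x = y + unitVec d i ∧ ω (y, i) = true)

/-- `x` and `y` are connected by an open path of `ω` all of whose vertices lie in `S`. -/
def connIn {d : ℕ} (ω : PConfig d) (S : Set (PVert d)) (x y : PVert d) : Prop :=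
  Relation.ReflTransGen (fun a b => a ∈ S ∧ b ∈ S ∧ openAdj ω a b) x y

/-- The probability, under the product Bernoulli(`p`) measure `ℙ_p`, of an event `A`
depending only on the (finitely many) edges in `E`: the sum, over configurations `η` of
the edges of `E`, of the Bernoulli weight of `η` times the indicator of `A`. -/
noncomputable def cylProb (d : ℕ) (p : ℝ) (E : Finset (PEdge d))
    (A : PConfig d → Prop) : ℝ :=
  ∑ η : {e // e ∈ E} → Bool,
    (∏ e : {e // e ∈ E}, if η e then p else 1 - p) *
      (if A (fun e => if h : e ∈ E then η ⟨e, h⟩ else false) then 1 else 0)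

/-- The influence `Inf_e[𝟙_A] = 𝔼_p[|𝟙_A(ω) − 𝟙_A(Flip_e ω)|]` of the edge `e` on an
event `A` depending only on the edges in `E`. -/
noncomputable def cylInfluence (d : ℕ) (p : ℝ) (E : Finset (PEdge d))
    (A : PConfig d → Prop) (e : PEdge d) : ℝ :=
  ∑ η : {e' // e' ∈ E} → Bool,
    (∏ e' : {e' // e' ∈ E}, if η e' then p else 1 - p) *
      |(if A (fun e' => if h : e' ∈ E then η ⟨e', h⟩ else false) then (1 : ℝ) else 0) -
        (if A (Function.update (fun e' => if h : e' ∈ E then η ⟨e', h⟩ else false) e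
            (!(if h : e ∈ E then η ⟨e, h⟩ else false))) then (1 : ℝ) else 0)|

/-- The sup-norm `‖x‖_∞` of a vertex, as a natural number. -/
def supNorm {d : ℕ} (x : PVert d) : ℕ :=
  Finset.univ.sup fun i => (x i).natAbs

/-- The box `Λ_n = [−n,n]^d`, as a set of vertices. -/
def box (d : ℕ) (n : ℕ) : Set (PVert d) := {x | supNorm x ≤ n}

/-- The box `Λ_n`, as a finset. -/
noncomputable def boxF (d : ℕ) (n : ℕ) : Finset (PVert d) :=
  Fintype.piFinset fun _ => Finset.Icc (-(n : ℤ)) n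

/-- The edges with both endpoints in a given finset of vertices. -/
def edgesIn (d : ℕ) (V : Finset (PVert d)) : Finset (PEdge d) :=
  (V ×ˢ (Finset.univ : Finset (Fin d))).filter fun e => e.1 + unitVec d e.2 ∈ V

/-- `E_n`: the edges with both endpoints in `Λ_n`. -/
noncomputable def boxEdges (d : ℕ) (n : ℕ) : Finset (PEdge d) := edgesIn d (boxF d n)

/-- The event `{0 ↔ ∂Λ_n}`: the origin is connected to `∂Λ_n = {x : ‖x‖_∞ = n}` by an
open path (inside `Λ_n`; this only depends on the edges of `E_n`). -/
def zeroToBoundary (d : ℕ) (n : ℕ) (ω : PConfig d) : Prop :=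
  ∃ y : PVert d, supNorm y = n ∧ connIn ω (box d n) 0 y

/-- `θ_n(p) = ℙ_p[0 ↔ ∂Λ_n]` (with `θ_0 = 1`). -/
noncomputable def theta (d : ℕ) (p : ℝ) (n : ℕ) : ℝ :=
  cylProb d p (boxEdges d n) (zeroToBoundary d n)

/-- `ℙ_p[0 ↔ ∞]`: since the events `{0 ↔ ∂Λ_n}` decrease to `{0 ↔ ∞}`, this is the
decreasing limit `⨅ n, θ_n(p)`. -/
noncomputable def probZeroToInfty (d : ℕ) (p : ℝ) : ℝ := ⨅ n : ℕ, theta d p n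

/-- The event `{Λ_k ↔ ∂Λ_N}` (within `Λ_N`). -/
def boxToBoundary (d : ℕ) (k N : ℕ) (ω : PConfig d) : Prop :=
  ∃ x y : PVert d, supNorm x ≤ k ∧ supNorm y = N ∧ connIn ω (box d N) x y

/-- `ℙ_p[∃ an infinite open connected component]`: the events `{Λ_k ↔ ∂Λ_{k+n}}`
decrease (as `n → ∞`) to `{Λ_k ↔ ∞}`, which increase (as `k → ∞`) to the event that
some vertex lies in an infinite open cluster; accordingly the probability is the
monotone double limit `⨆ k, ⨅ n` of finite-volume probabilities. -/
noncomputable def probInfiniteCluster (d : ℕ) (p : ℝ) : ℝ :=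
  ⨆ k : ℕ, ⨅ n : ℕ,
    cylProb d p (boxEdges d (k + n)) (boxToBoundary d k (k + n))

/-- The critical point `p_c = sup{p ∈ [0,1] : ℙ_p[0 ↔ ∞] = 0}` of Bernoulli bond
percolation on `ℤ^d`. -/
noncomputable def pCrit (d : ℕ) : ℝ :=
  sSup {p : ℝ | p ∈ Set.Icc (0 : ℝ) 1 ∧ probZeroToInfty d p = 0}

end Percolation

section PlanarPercolation

/-! Rectangles and crossing events for `ℤ²`. -/

/-- The vertex set of the rectangle `R(n,m) = [0,n] × [0,m]` in `ℤ²`. -/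
def rect (n m : ℕ) : Set (PVert 2) :=
  {x | 0 ≤ x 0 ∧ x 0 ≤ n ∧ 0 ≤ x 1 ∧ x 1 ≤ m}

/-- The rectangle `R(n,m)`, as a finset. -/
noncomputable def rectF (n m : ℕ) : Finset (PVert 2) :=
  Fintype.piFinset fun j => Finset.Icc 0 (if j = 0 then (n : ℤ) else (m : ℤ))

/-- The edges of the rectangle `R(n,m)`. -/
noncomputable def rectEdges (n m : ℕ) : Finset (PEdge 2) := edgesIn 2 (rectF n m)

/-- `ℋ(n,m)`: the rectangle `R(n,m)` contains an open path from its left side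
`{0} × [0,m]` to its right side `{n} × [0,m]`. -/
def crossH (n m : ℕ) (ω : PConfig 2) : Prop :=
  ∃ x y : PVert 2, x ∈ rect n m ∧ x 0 = 0 ∧ y ∈ rect n m ∧ y 0 = n ∧
    connIn ω (rect n m) x y

/-- `𝒱(n,m)`: the rectangle `R(n,m)` contains an open path from its bottom side
`[0,n] × {0}` to its top side `[0,n] × {m}`. -/
def crossV (n m : ℕ) (ω : PConfig 2) : Prop :=
  ∃ x y : PVert 2, x ∈ rect n m ∧ x 1 = 0 ∧ y ∈ rect n m ∧ y 1 = m ∧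
    connIn ω (rect n m) x y

/-- `ℙ_p[ℋ(n,m)]`. -/
noncomputable def probCrossH (p : ℝ) (n m : ℕ) : ℝ :=
  cylProb 2 p (rectEdges n m) (crossH n m)

/-- `ℙ_p[𝒱(n,m)]`. -/
noncomputable def probCrossV (p : ℝ) (n m : ℕ) : ℝ :=
  cylProb 2 p (rectEdges n m) (crossV n m)

end PlanarPercolation


/-! ### Toolkit: cylinder probabilities in subset normal form -/

section Toolkit
set_option maxHeartbeats 1000000
set_option synthInstance.maxHeartbeats 400000

open Finset

variable {d : ℕ}

/-- Indicator of a proposition. -/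
noncomputable def Ind (P : Prop) : ℝ := if P then 1 else 0

lemma Ind_nonneg {P : Prop} : 0 ≤ Ind P := by
  unfold Ind; split <;> norm_num

lemma Ind_le_one {P : Prop} : Ind P ≤ 1 := by
  unfold Ind; split <;> norm_num

lemma Ind_mono {P Q : Prop} (h : P → Q) : Ind P ≤ Ind Q := by
  unfold Ind; by_cases hP : P
  · simp [hP, h hP]
  · simp [hP]; positivity

lemma Ind_congr {P Q : Prop} (h : P ↔ Q) : Ind P = Ind Q := by
  unfold Ind; simp only [h]

lemma Ind_true {P : Prop} (h : P) : Ind P = 1 := by simp [Ind, h]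
lemma Ind_false {P : Prop} (h : ¬ P) : Ind P = 0 := by simp [Ind, h]

lemma Ind_not (P : Prop) : Ind (¬ P) = 1 - Ind P := by
  unfold Ind; by_cases h : P <;> simp [h]

/-- The extension of a partial configuration by closed edges. -/
def extCfg (E : Finset (PEdge d)) (η : {e // e ∈ E} → Bool) : PConfig d :=
  fun e => if h : e ∈ E then η ⟨e, h⟩ else false

lemma cylProb_def (p : ℝ) (E : Finset (PEdge d)) (A : PConfig d → Prop) :
    cylProb d p E A =
      ∑ η : {e // e ∈ E} → Bool,
        (∏ e : {e // e ∈ E}, if η e then p else 1 - p) * Ind (A (extCfg E η)) := rfl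

/-- The configuration associated to a set `s` of open edges. -/
def scfg (s : Finset (PEdge d)) : PConfig d := fun e => decide (e ∈ s)

lemma scfg_eq_true {s : Finset (PEdge d)} {e : PEdge d} :
    scfg s e = true ↔ e ∈ s := by simp [scfg]

/-- Bernoulli weight of the subset `s` of open edges inside `E`. -/
noncomputable def pw (p : ℝ) (E s : Finset (PEdge d)) : ℝ :=
  p ^ s.card * (1 - p) ^ (E \ s).card

lemma pw_nonneg {p : ℝ} (h0 : 0 ≤ p) (h1 : p ≤ 1) (E s : Finset (PEdge d)) :
    0 ≤ pw p E s := by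
  have : 0 ≤ 1 - p := by linarith
  unfold pw; positivity

/-- `cylProb` in subset normal form. -/
lemma cylProb_eq_sum_powerset (p : ℝ) (E : Finset (PEdge d)) (A : PConfig d → Prop) :
    cylProb d p E A = ∑ s ∈ E.powerset, pw p E s * Ind (A (scfg s)) := by
  classical
  rw [cylProb_def]
  rw [← Finset.sum_attach (E.powerset) (fun s => pw p E s * Ind (A (scfg s)))]
  refine Finset.sum_nbij' (i := fun (η : {e // e ∈ E} → Bool) =>
      (⟨E.filter (fun e => extCfg E η e = true), by
        simp [Finset.mem_powerset, Finset.filter_subset]⟩ : {s // s ∈ E.powerset}))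
    (j := fun s => fun e => scfg s.1 e.1) ?_ ?_ ?_ ?_ ?_
  · intro η _; exact Finset.mem_attach _ _
  · intro s _; exact Finset.mem_univ _
  · -- j ∘ i = id
    intro η _
    funext e
    rcases e with ⟨e, he⟩
    simp only [scfg, extCfg, Finset.mem_filter]
    cases h : η ⟨e, he⟩ <;> simp [he, h]
  · -- i ∘ j = id
    intro s _
    rcases s with ⟨s, hs⟩
    rw [Finset.mem_powerset] at hs
    apply Subtype.ext
    simp only []
    ext e
    simp only [Finset.mem_filter, extCfg]
    constructor
    · rintro ⟨he, h2⟩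
      rw [dif_pos he] at h2
      simpa [scfg] using h2
    · intro hes
      refine ⟨hs hes, ?_⟩
      rw [dif_pos (hs hes)]
      simpa [scfg] using hes
  · -- summands agree
    intro η _
    have hcfg : scfg (E.filter (fun e => extCfg E η e = true)) = extCfg E η := by
      funext e
      by_cases he : e ∈ E
      · simp only [scfg, extCfg, Finset.mem_filter]
        cases h : η ⟨e, he⟩ <;> simp [he, h]
      · simp only [scfg, extCfg, Finset.mem_filter]
        simp [he]
    congr 1
    · -- weights agree
      unfold pw
      rw [Finset.prod_ite (f := fun _ => p) (g := fun _ => 1 - p), Finset.prod_const,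
        Finset.prod_const]
      congr 2
      · refine Finset.card_bij (fun (x : {e // e ∈ E}) _ => x.val) ?_ ?_ ?_
        · intro a ha
          simp only [Finset.mem_filter] at ha ⊢
          refine ⟨a.2, ?_⟩
          simp [extCfg, a.2, ha.2]
        · intro a _ b _ h; exact Subtype.ext h
        · intro b hb
          rw [Finset.mem_filter] at hb; simp only [extCfg] at hb
          rcases hb with ⟨hbE, hb2⟩
          rw [dif_pos hbE] at hb2
          exact ⟨⟨b, hbE⟩, Finset.mem_filter.mpr ⟨Finset.mem_univ _, by simp [hb2]⟩, rfl⟩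
      · rw [← Finset.filter_not]
        refine Finset.card_bij (fun (x : {e // e ∈ E}) _ => x.val) ?_ ?_ ?_
        · intro a ha
          simp only [Finset.mem_filter] at ha ⊢
          refine ⟨a.2, ?_⟩
          simp only [extCfg, dif_pos a.2]
          simpa using ha.2
        · intro a _ b _ h; exact Subtype.ext h
        · intro b hb
          rw [Finset.mem_filter] at hb; simp only [extCfg] at hb
          rcases hb with ⟨hbE, hb2⟩
          rw [dif_pos hbE] at hb2
          exact ⟨⟨b, hbE⟩, Finset.mem_filter.mpr ⟨Finset.mem_univ _, by simp [hb2]⟩, rfl⟩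
    · rw [hcfg]

end Toolkit

section Toolkit2
set_option maxHeartbeats 1000000
set_option synthInstance.maxHeartbeats 400000

open Finset

variable {d : ℕ}

lemma Ind_and (P Q : Prop) : Ind (P ∧ Q) = Ind P * Ind Q := by
  unfold Ind; by_cases hP : P <;> by_cases hQ : Q <;> simp [hP, hQ]

lemma pw_insert_notmem {p : ℝ} {E t : Finset (PEdge d)} {a : PEdge d}
    (haE : a ∉ E) (ht : t ⊆ E) : pw p (insert a E) t = (1 - p) * pw p E t := by
  have hat : a ∉ t := fun h => haE (ht h)
  unfold pw
  have h1 : insert a E \ t = insert a (E \ t) := by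
    ext x; simp only [Finset.mem_sdiff, Finset.mem_insert]
    constructor
    · rintro ⟨h | h, h2⟩
      · exact Or.inl h
      · exact Or.inr ⟨h, h2⟩
    · rintro (rfl | ⟨h1, h2⟩)
      · exact ⟨Or.inl rfl, hat⟩
      · exact ⟨Or.inr h1, h2⟩
  rw [h1, Finset.card_insert_of_notMem (by simp [haE])]
  ring

lemma pw_insert_mem {p : ℝ} {E t : Finset (PEdge d)} {a : PEdge d}
    (haE : a ∉ E) (ht : t ⊆ E) : pw p (insert a E) (insert a t) = p * pw p E t := by
  have hat : a ∉ t := fun h => haE (ht h)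
  unfold pw
  have h1 : insert a E \ insert a t = E \ t := by
    ext x; simp only [Finset.mem_sdiff, Finset.mem_insert]
    constructor
    · rintro ⟨h | h, h2⟩
      · exact absurd (Or.inl h) h2
      · exact ⟨h, fun hx => h2 (Or.inr hx)⟩
    · rintro ⟨h1, h2⟩
      exact ⟨Or.inr h1, by rintro (rfl | h) <;> [exact haE h1; exact h2 h]⟩
  rw [h1, Finset.card_insert_of_notMem hat]
  ring

lemma sum_pw (p : ℝ) (E : Finset (PEdge d)) : ∑ s ∈ E.powerset, pw p E s = 1 := by
  classical
  induction E using Finset.induction_on with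
  | empty => simp [pw]
  | insert a E' haE ih =>
    rw [Finset.sum_powerset_insert haE]
    have h1 : ∀ t ∈ E'.powerset, pw p (insert a E') t = (1 - p) * pw p E' t := by
      intro t ht; exact pw_insert_notmem haE (Finset.mem_powerset.mp ht)
    have h2 : ∀ t ∈ E'.powerset, pw p (insert a E') (insert a t) = p * pw p E' t := by
      intro t ht; exact pw_insert_mem haE (Finset.mem_powerset.mp ht)
    rw [Finset.sum_congr rfl h1, Finset.sum_congr rfl h2, ← Finset.mul_sum, ← Finset.mul_sum, ih]
    ring

variable {p : ℝ}

lemma cylProb_nonneg (h0 : 0 ≤ p) (h1 : p ≤ 1) (E : Finset (PEdge d)) (A : PConfig d → Prop) :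
    0 ≤ cylProb d p E A := by
  rw [cylProb_eq_sum_powerset]
  exact Finset.sum_nonneg fun s _ => mul_nonneg (pw_nonneg h0 h1 _ _) Ind_nonneg

lemma cylProb_le_one (h0 : 0 ≤ p) (h1 : p ≤ 1) (E : Finset (PEdge d)) (A : PConfig d → Prop) :
    cylProb d p E A ≤ 1 := by
  rw [cylProb_eq_sum_powerset]
  calc ∑ s ∈ E.powerset, pw p E s * Ind (A (scfg s))
      ≤ ∑ s ∈ E.powerset, pw p E s := by
        refine Finset.sum_le_sum fun s _ => ?_
        have := pw_nonneg h0 h1 E s (p := p)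
        nlinarith [Ind_le_one (P := A (scfg s)), Ind_nonneg (P := A (scfg s))]
    _ = 1 := sum_pw p E

lemma cylProb_congr {E : Finset (PEdge d)} {A B : PConfig d → Prop}
    (h : ∀ ω, A ω ↔ B ω) : cylProb d p E A = cylProb d p E B := by
  rw [cylProb_eq_sum_powerset, cylProb_eq_sum_powerset]
  exact Finset.sum_congr rfl fun s _ => by rw [Ind_congr (h _)]

lemma cylProb_true (E : Finset (PEdge d)) (A : PConfig d → Prop) (h : ∀ ω, A ω) :
    cylProb d p E A = 1 := by
  rw [cylProb_eq_sum_powerset]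
  calc ∑ s ∈ E.powerset, pw p E s * Ind (A (scfg s))
      = ∑ s ∈ E.powerset, pw p E s := by
        refine Finset.sum_congr rfl fun s _ => ?_
        rw [Ind_true (h _), mul_one]
    _ = 1 := sum_pw p E

lemma cylProb_mono (h0 : 0 ≤ p) (h1 : p ≤ 1) {E : Finset (PEdge d)} {A B : PConfig d → Prop}
    (h : ∀ ω, A ω → B ω) : cylProb d p E A ≤ cylProb d p E B := by
  rw [cylProb_eq_sum_powerset, cylProb_eq_sum_powerset]
  refine Finset.sum_le_sum fun s _ => ?_
  exact mul_le_mul_of_nonneg_left (Ind_mono (h _)) (pw_nonneg h0 h1 _ _)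

lemma cylProb_compl (E : Finset (PEdge d)) (A : PConfig d → Prop) :
    cylProb d p E (fun ω => ¬ A ω) = 1 - cylProb d p E A := by
  rw [cylProb_eq_sum_powerset, cylProb_eq_sum_powerset]
  have : ∀ s ∈ E.powerset, pw p E s * Ind (¬ A (scfg s))
      = pw p E s - pw p E s * Ind (A (scfg s)) := by
    intro s _; rw [Ind_not]; ring
  rw [Finset.sum_congr rfl this, Finset.sum_sub_distrib, sum_pw]

/-- Union bound. -/
lemma cylProb_le_sum {ι : Type*} (h0 : 0 ≤ p) (h1 : p ≤ 1) {E : Finset (PEdge d)}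
    {A : PConfig d → Prop} {u : Finset ι} {B : ι → PConfig d → Prop}
    (h : ∀ ω, A ω → ∃ i ∈ u, B i ω) :
    cylProb d p E A ≤ ∑ i ∈ u, cylProb d p E (B i) := by
  have key : ∀ ω, Ind (A ω) ≤ ∑ i ∈ u, Ind (B i ω) := by
    intro ω
    by_cases hA : A ω
    · obtain ⟨i, hi, hBi⟩ := h ω hA
      rw [Ind_true hA]
      calc (1:ℝ) = Ind (B i ω) := (Ind_true hBi).symm
        _ ≤ ∑ i ∈ u, Ind (B i ω) :=
          Finset.single_le_sum (f := fun i => Ind (B i ω)) (fun j _ => Ind_nonneg) hi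
    · rw [Ind_false hA]
      exact Finset.sum_nonneg fun i _ => Ind_nonneg
  rw [cylProb_eq_sum_powerset]
  calc ∑ s ∈ E.powerset, pw p E s * Ind (A (scfg s))
      ≤ ∑ s ∈ E.powerset, pw p E s * (∑ i ∈ u, Ind (B i (scfg s))) := by
        refine Finset.sum_le_sum fun s _ => ?_
        exact mul_le_mul_of_nonneg_left (key _) (pw_nonneg h0 h1 _ _)
    _ = ∑ i ∈ u, ∑ s ∈ E.powerset, pw p E s * Ind (B i (scfg s)) := by
        simp_rw [Finset.mul_sum]
        exact Finset.sum_comm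
    _ = ∑ i ∈ u, cylProb d p E (B i) := by
        refine Finset.sum_congr rfl fun i _ => (cylProb_eq_sum_powerset _ _ _).symm

/-- Lower bound by a disjoint family of subevents. -/
lemma sum_le_cylProb {ι : Type*} (h0 : 0 ≤ p) (h1 : p ≤ 1) {E : Finset (PEdge d)}
    {A : PConfig d → Prop} {u : Finset ι} {B : ι → PConfig d → Prop}
    (hBA : ∀ i ∈ u, ∀ ω, B i ω → A ω)
    (hdisj : ∀ i ∈ u, ∀ j ∈ u, i ≠ j → ∀ ω, B i ω → ¬ B j ω) :
    ∑ i ∈ u, cylProb d p E (B i) ≤ cylProb d p E A := by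
  have key : ∀ ω, (∑ i ∈ u, Ind (B i ω)) ≤ Ind (A ω) := by
    intro ω
    by_cases hex : ∃ i ∈ u, B i ω
    · obtain ⟨i₀, hi₀, hB₀⟩ := hex
      have : ∑ i ∈ u, Ind (B i ω) = Ind (B i₀ ω) := by
        refine Finset.sum_eq_single_of_mem i₀ hi₀ fun j hj hne => ?_
        exact Ind_false (hdisj i₀ hi₀ j hj (fun h => hne (h ▸ rfl)) ω hB₀)
      rw [this, Ind_true hB₀, Ind_true (hBA i₀ hi₀ ω hB₀)]
    · push_neg at hex
      have : ∑ i ∈ u, Ind (B i ω) = 0 :=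
        Finset.sum_eq_zero fun i hi => Ind_false (hex i hi)
      rw [this]; exact Ind_nonneg
  rw [cylProb_eq_sum_powerset]
  calc ∑ i ∈ u, cylProb d p E (B i)
      = ∑ s ∈ E.powerset, pw p E s * (∑ i ∈ u, Ind (B i (scfg s))) := by
        simp_rw [Finset.mul_sum]
        rw [Finset.sum_comm]
        exact Finset.sum_congr rfl fun i _ => cylProb_eq_sum_powerset _ _ _
    _ ≤ ∑ s ∈ E.powerset, pw p E s * Ind (A (scfg s)) := by
        refine Finset.sum_le_sum fun s _ => ?_
        exact mul_le_mul_of_nonneg_left (key _) (pw_nonneg h0 h1 _ _)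

end Toolkit2

section Toolkit3
set_option maxHeartbeats 1000000
set_option synthInstance.maxHeartbeats 400000

open Finset

variable {d : ℕ} {p : ℝ}

/-- `A` depends only on the edges of `E`. -/
def DepOn (A : PConfig d → Prop) (E : Finset (PEdge d)) : Prop :=
  ∀ ω ω' : PConfig d, (∀ e ∈ E, ω e = ω' e) → (A ω ↔ A ω')

lemma sum_powerset_union_split {E₁ E₂ : Finset (PEdge d)} (hd : Disjoint E₁ E₂)
    (f : Finset (PEdge d) → ℝ) :
    ∑ s ∈ (E₁ ∪ E₂).powerset, f s = ∑ a ∈ E₁.powerset, ∑ b ∈ E₂.powerset, f (a ∪ b) := by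
  classical
  rw [← Finset.sum_product']
  refine Finset.sum_nbij' (i := fun s => (s ∩ E₁, s ∩ E₂)) (j := fun x => x.1 ∪ x.2) ?_ ?_ ?_ ?_ ?_
  · intro s hs
    simp only [Finset.mem_product, Finset.mem_powerset]
    exact ⟨Finset.inter_subset_right, Finset.inter_subset_right⟩
  · intro x hx
    simp only [Finset.mem_product, Finset.mem_powerset] at hx
    rw [Finset.mem_powerset]
    exact Finset.union_subset_union hx.1 hx.2
  · intro s hs
    rw [Finset.mem_powerset] at hs
    simp only []
    rw [← Finset.inter_union_distrib_left]
    exact Finset.inter_eq_left.mpr hs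
  · intro x hx
    simp only [Finset.mem_product, Finset.mem_powerset] at hx
    rcases x with ⟨a, b⟩
    simp only []
    have hab : a ∩ E₂ = ∅ := by
      apply Finset.eq_empty_of_forall_notMem
      intro e he
      rw [Finset.mem_inter] at he
      exact (Finset.disjoint_left.mp hd (hx.1 he.1)) he.2
    have hba : b ∩ E₁ = ∅ := by
      apply Finset.eq_empty_of_forall_notMem
      intro e he
      rw [Finset.mem_inter] at he
      exact (Finset.disjoint_left.mp hd he.2) (hx.2 he.1)
    have h1 : (a ∪ b) ∩ E₁ = a := by
      rw [Finset.union_inter_distrib_right, hba, Finset.union_empty]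
      exact Finset.inter_eq_left.mpr hx.1
    have h2 : (a ∪ b) ∩ E₂ = b := by
      rw [Finset.union_inter_distrib_right, hab, Finset.empty_union]
      exact Finset.inter_eq_left.mpr hx.2
    rw [h1, h2]
  · intro s hs
    rw [Finset.mem_powerset] at hs
    simp only []
    rw [← Finset.inter_union_distrib_left, Finset.inter_eq_left.mpr hs]

lemma pw_union_split {E₁ E₂ a b : Finset (PEdge d)} (hd : Disjoint E₁ E₂)
    (ha : a ⊆ E₁) (hb : b ⊆ E₂) :
    pw p (E₁ ∪ E₂) (a ∪ b) = pw p E₁ a * pw p E₂ b := by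
  have hab : Disjoint a b := hd.mono ha hb
  have h1 : (E₁ ∪ E₂) \ (a ∪ b) = (E₁ \ a) ∪ (E₂ \ b) := by
    ext e
    simp only [Finset.mem_sdiff, Finset.mem_union]
    constructor
    · rintro ⟨h | h, h2⟩
      · exact Or.inl ⟨h, fun ha' => h2 (Or.inl ha')⟩
      · exact Or.inr ⟨h, fun hb' => h2 (Or.inr hb')⟩
    · rintro (⟨h1, h2⟩ | ⟨h1, h2⟩)
      · refine ⟨Or.inl h1, ?_⟩
        rintro (h | h)
        · exact h2 h
        · exact (Finset.disjoint_left.mp hd h1) (hb h)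
      · refine ⟨Or.inr h1, ?_⟩
        rintro (h | h)
        · exact (Finset.disjoint_left.mp hd (ha h)) h1
        · exact h2 h
  have h2 : Disjoint (E₁ \ a) (E₂ \ b) :=
    (hd.mono Finset.sdiff_subset Finset.sdiff_subset)
  unfold pw
  rw [Finset.card_union_of_disjoint hab, h1, Finset.card_union_of_disjoint h2,
    pow_add, pow_add]
  ring

lemma scfg_union_left {E₁ E₂ a b : Finset (PEdge d)} (hd : Disjoint E₁ E₂)
    (hb : b ⊆ E₂) : ∀ e ∈ E₁, scfg (a ∪ b) e = scfg a e := by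
  intro e he
  have : e ∉ b := fun h => (Finset.disjoint_left.mp hd he) (hb h)
  simp [scfg, this]

lemma scfg_union_right {E₁ E₂ a b : Finset (PEdge d)} (hd : Disjoint E₁ E₂)
    (ha : a ⊆ E₁) : ∀ e ∈ E₂, scfg (a ∪ b) e = scfg b e := by
  intro e he
  have : e ∉ a := fun h => (Finset.disjoint_left.mp hd (ha h)) he
  simp [scfg, this]

/-- Independence: product formula for events with disjoint supports. -/
lemma cylProb_mul_of_depOn {E₁ E₂ : Finset (PEdge d)} (hd : Disjoint E₁ E₂)
    {A B : PConfig d → Prop} (hA : DepOn A E₁) (hB : DepOn B E₂) :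
    cylProb d p (E₁ ∪ E₂) (fun ω => A ω ∧ B ω) = cylProb d p E₁ A * cylProb d p E₂ B := by
  rw [cylProb_eq_sum_powerset, cylProb_eq_sum_powerset, cylProb_eq_sum_powerset,
    sum_powerset_union_split hd]
  rw [Finset.sum_mul_sum]
  refine Finset.sum_congr rfl fun a ha => ?_
  refine Finset.sum_congr rfl fun b hb => ?_
  rw [Finset.mem_powerset] at ha hb
  rw [pw_union_split hd ha hb]
  have hAe : A (scfg (a ∪ b)) ↔ A (scfg a) := hA _ _ (scfg_union_left hd hb)
  have hBe : B (scfg (a ∪ b)) ↔ B (scfg b) := hB _ _ (scfg_union_right hd ha)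
  rw [Ind_and, Ind_congr hAe, Ind_congr hBe]
  ring

/-- Support reduction. -/
lemma cylProb_depOn_congr {E E' : Finset (PEdge d)} (hsub : E' ⊆ E)
    {A : PConfig d → Prop} (hA : DepOn A E') :
    cylProb d p E A = cylProb d p E' A := by
  have hu : E' ∪ (E \ E') = E := Finset.union_sdiff_of_subset hsub
  have hd : Disjoint E' (E \ E') := Finset.disjoint_sdiff
  calc cylProb d p E A
      = cylProb d p (E' ∪ (E \ E')) (fun ω => A ω ∧ (fun _ : PConfig d => True) ω) := by
        rw [hu]; exact cylProb_congr fun ω => by simp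
    _ = cylProb d p E' A * cylProb d p (E \ E') (fun _ => True) :=
        cylProb_mul_of_depOn hd hA (fun ω ω' _ => Iff.rfl)
    _ = cylProb d p E' A := by
        rw [cylProb_true _ _ (fun _ => trivial), mul_one]

lemma cylProb_single_edge (e : PEdge d) :
    cylProb d p {e} (fun ω => ω e = true) = p := by
  rw [cylProb_eq_sum_powerset]
  have h0 : ({e} : Finset (PEdge d)) = insert e ∅ := rfl
  rw [h0, Finset.sum_powerset_insert (Finset.notMem_empty e)]
  rw [Finset.powerset_empty, Finset.sum_singleton, Finset.sum_singleton]
  have h1 : scfg (∅ : Finset (PEdge d)) e = false := by simp [scfg]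
  have h2 : scfg (insert e (∅ : Finset (PEdge d))) e = true := by simp [scfg]
  rw [Ind_false (by simp [h1]), Ind_true h2]
  unfold pw
  simp

/-- Forcing the edge `e` to take the value `b`. -/
def force (e : PEdge d) (b : Bool) (A : PConfig d → Prop) : PConfig d → Prop :=
  fun ω => A (Function.update ω e b)

lemma update_scfg_true (e : PEdge d) (s : Finset (PEdge d)) :
    Function.update (scfg s) e true = scfg (insert e s) := by
  funext x
  by_cases hx : x = e
  · subst hx; simp [scfg, Function.update_self]
  · rw [Function.update_of_ne hx]
    simp [scfg, hx]

lemma update_scfg_false (e : PEdge d) (s : Finset (PEdge d)) :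
    Function.update (scfg s) e false = scfg (s.erase e) := by
  funext x
  by_cases hx : x = e
  · subst hx; simp [scfg, Function.update_self]
  · rw [Function.update_of_ne hx]
    simp [scfg, hx]

/-- Peeling one edge. -/
lemma cylProb_peel {E' : Finset (PEdge d)} {e : PEdge d} (he : e ∉ E')
    (A : PConfig d → Prop) :
    cylProb d p (insert e E') A
      = (1 - p) * cylProb d p E' (force e false A) + p * cylProb d p E' (force e true A) := by
  classical
  rw [cylProb_eq_sum_powerset, cylProb_eq_sum_powerset, cylProb_eq_sum_powerset,
    Finset.sum_powerset_insert he]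
  congr 1
  · rw [Finset.mul_sum]
    refine Finset.sum_congr rfl fun t ht => ?_
    rw [Finset.mem_powerset] at ht
    have het : e ∉ t := fun h => he (ht h)
    rw [pw_insert_notmem he ht]
    have : force e false A (scfg t) ↔ A (scfg t) := by
      unfold force
      rw [update_scfg_false, Finset.erase_eq_of_notMem het]
    rw [Ind_congr this]
    ring
  · rw [Finset.mul_sum]
    refine Finset.sum_congr rfl fun t ht => ?_
    rw [Finset.mem_powerset] at ht
    rw [pw_insert_mem he ht]
    have : force e true A (scfg t) ↔ A (scfg (insert e t)) := by
      unfold force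
      rw [update_scfg_true]
    rw [Ind_congr this]
    ring

lemma force_force_same (e : PEdge d) (b c : Bool) (A : PConfig d → Prop) :
    force e c (force e b A) = force e b A := by
  funext ω
  unfold force
  rw [Function.update_idem]

lemma force_comm {e f : PEdge d} (hne : f ≠ e) (b c : Bool) (A : PConfig d → Prop) :
    force e c (force f b A) = force f b (force e c A) := by
  funext ω
  unfold force
  rw [Function.update_comm (Ne.symm hne)]

/-- Russo-type derivative formula. -/
lemma hasDerivAt_cylProb (E : Finset (PEdge d)) (A : PConfig d → Prop) (p : ℝ) :
    HasDerivAt (fun q => cylProb d q E A)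
      (∑ e ∈ E, (cylProb d p E (force e true A) - cylProb d p E (force e false A))) p := by
  classical
  induction E using Finset.induction_on generalizing A with
  | empty =>
    have : (fun q => cylProb d q ∅ A) = fun _ => Ind (A (scfg ∅)) := by
      funext q
      rw [cylProb_eq_sum_powerset]
      simp [pw]
    rw [this, Finset.sum_empty]
    exact hasDerivAt_const _ _
  | @insert e E' he ih =>
    have heq : (fun q => cylProb d q (insert e E') A)
        = fun q => (1 - q) * cylProb d q E' (force e false A)
            + q * cylProb d q E' (force e true A) := by
      funext q; exact cylProb_peel he A
    rw [heq]
    have h0 := ih (force e false A)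
    have h1 := ih (force e true A)
    have hd : HasDerivAt (fun q : ℝ => (1 - q)) (-1 : ℝ) p := by
      simpa using (hasDerivAt_id p).const_sub 1
    have H := ((hd.mul h0).add ((hasDerivAt_id p).mul h1))
    refine H.congr_deriv ?_; symm
    rw [Finset.sum_insert he]
    have hpeel : ∀ (B : PConfig d → Prop), cylProb d p (insert e E') B
        = (1 - p) * cylProb d p E' (force e false B) + p * cylProb d p E' (force e true B) :=
      fun B => cylProb_peel he B
    have hself : ∀ b, cylProb d p (insert e E') (force e b A) = cylProb d p E' (force e b A) := by
      intro b
      rw [hpeel (force e b A), force_force_same, force_force_same]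
      ring
    have hother : ∀ f ∈ E', ∀ b, cylProb d p (insert e E') (force f b A)
        = (1 - p) * cylProb d p E' (force f b (force e false A))
            + p * cylProb d p E' (force f b (force e true A)) := by
      intro f hf b
      have hne : f ≠ e := fun h => he (h ▸ hf)
      rw [hpeel (force f b A), force_comm hne, force_comm hne]
    have hsum : ∑ f ∈ E', (cylProb d p (insert e E') (force f true A)
          - cylProb d p (insert e E') (force f false A))
        = (1 - p) * (∑ f ∈ E', (cylProb d p E' (force f true (force e false A))
              - cylProb d p E' (force f false (force e false A))))
          + p * (∑ f ∈ E', (cylProb d p E' (force f true (force e true A))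
              - cylProb d p E' (force f false (force e true A)))) := by
      rw [Finset.mul_sum, Finset.mul_sum, ← Finset.sum_add_distrib]
      refine Finset.sum_congr rfl fun f hf => ?_
      rw [hother f hf true, hother f hf false]
      ring
    rw [hsum, hself true, hself false]
    simp only [id_eq]
    ring
end Toolkit3

section Geometry
set_option maxHeartbeats 1000000
set_option synthInstance.maxHeartbeats 400000

open Finset

variable {d : ℕ}

lemma supNorm_le_iff {x : PVert d} {n : ℕ} : supNorm x ≤ n ↔ ∀ i, (x i).natAbs ≤ n := by
  unfold supNorm
  rw [Finset.sup_le_iff]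
  simp

lemma natAbs_le_supNorm (x : PVert d) (i : Fin d) : (x i).natAbs ≤ supNorm x := by
  unfold supNorm
  exact Finset.le_sup (f := fun i => (x i).natAbs) (Finset.mem_univ i)

lemma supNorm_zero : supNorm (0 : PVert d) = 0 := by
  unfold supNorm
  simp

lemma supNorm_add_le (x y : PVert d) : supNorm (x + y) ≤ supNorm x + supNorm y := by
  rw [supNorm_le_iff]
  intro i
  have h1 := natAbs_le_supNorm x i
  have h2 := natAbs_le_supNorm y i
  have := Int.natAbs_add_le (x i) (y i)
  simp only [Pi.add_apply]
  omega

lemma supNorm_neg (x : PVert d) : supNorm (-x) = supNorm x := by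
  unfold supNorm
  congr 1
  funext i
  simp

lemma supNorm_unitVec_le (i : Fin d) : supNorm (unitVec d i) ≤ 1 := by
  rw [supNorm_le_iff]
  intro j
  unfold unitVec
  by_cases h : j = i <;> simp [h]

lemma mem_box_iff {x : PVert d} {n : ℕ} : x ∈ box d n ↔ supNorm x ≤ n := Iff.rfl

lemma mem_boxF_iff {x : PVert d} {n : ℕ} : x ∈ boxF d n ↔ supNorm x ≤ n := by
  unfold boxF
  rw [Fintype.mem_piFinset, supNorm_le_iff]
  constructor
  · intro h i
    have := h i
    rw [Finset.mem_Icc] at this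
    omega
  · intro h i
    rw [Finset.mem_Icc]
    have := h i
    omega

lemma boxF_coe (n : ℕ) : (boxF d n : Set (PVert d)) = box d n := by
  ext x
  rw [Finset.mem_coe, mem_boxF_iff, mem_box_iff]

lemma mem_edgesIn_iff {V : Finset (PVert d)} {f : PEdge d} :
    f ∈ edgesIn d V ↔ f.1 ∈ V ∧ f.1 + unitVec d f.2 ∈ V := by
  unfold edgesIn
  rw [Finset.mem_filter, Finset.mem_product]
  simp only [Finset.mem_univ, and_true]

lemma mem_boxEdges_iff {n : ℕ} {f : PEdge d} :
    f ∈ boxEdges d n ↔ supNorm f.1 ≤ n ∧ supNorm (f.1 + unitVec d f.2) ≤ n := by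
  unfold boxEdges
  rw [mem_edgesIn_iff, mem_boxF_iff, mem_boxF_iff]

lemma edgesIn_mono {V W : Finset (PVert d)} (h : V ⊆ W) : edgesIn d V ⊆ edgesIn d W := by
  intro f hf
  rw [mem_edgesIn_iff] at hf ⊢
  exact ⟨h hf.1, h hf.2⟩

/-! ### openAdj and connIn lemmas -/

lemma openAdj_mono {ω ω' : PConfig d} (h : ∀ e, ω e = true → ω' e = true)
    {a b : PVert d} (hab : openAdj ω a b) : openAdj ω' a b := by
  obtain ⟨i, hi | hi⟩ := hab
  · exact ⟨i, Or.inl ⟨hi.1, h _ hi.2⟩⟩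
  · exact ⟨i, Or.inr ⟨hi.1, h _ hi.2⟩⟩

lemma openAdj_symm {ω : PConfig d} {a b : PVert d} (h : openAdj ω a b) : openAdj ω b a := by
  obtain ⟨i, hi | hi⟩ := h
  · exact ⟨i, Or.inr hi⟩
  · exact ⟨i, Or.inl hi⟩

/-- The encoded edge witnessing an adjacency. -/
lemma openAdj_edge {ω : PConfig d} {a b : PVert d} (h : openAdj ω a b) :
    ∃ f : PEdge d, ω f = true ∧
      ((f.1 = a ∧ f.1 + unitVec d f.2 = b) ∨ (f.1 = b ∧ f.1 + unitVec d f.2 = a)) := by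
  obtain ⟨i, hi | hi⟩ := h
  · exact ⟨(a, i), hi.2, Or.inl ⟨rfl, hi.1.symm⟩⟩
  · exact ⟨(b, i), hi.2, Or.inr ⟨rfl, hi.1.symm⟩⟩

lemma openAdj_of_edge {ω : PConfig d} {f : PEdge d} (hf : ω f = true) :
    openAdj ω f.1 (f.1 + unitVec d f.2) := ⟨f.2, Or.inl ⟨rfl, hf⟩⟩

lemma openAdj_supNorm_le {ω : PConfig d} {a b y : PVert d} (h : openAdj ω a b) :
    supNorm (b - y) ≤ supNorm (a - y) + 1 := by
  obtain ⟨i, hi | hi⟩ := h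
  · have : b - y = (a - y) + unitVec d i := by rw [hi.1]; ring
    rw [this]
    calc supNorm ((a - y) + unitVec d i) ≤ supNorm (a - y) + supNorm (unitVec d i) :=
          supNorm_add_le _ _
      _ ≤ supNorm (a - y) + 1 := by have := supNorm_unitVec_le (d := d) i; omega
  · have : b - y = (a - y) + (-(unitVec d i)) := by rw [hi.1]; ring
    rw [this]
    calc supNorm ((a - y) + (-(unitVec d i))) ≤ supNorm (a - y) + supNorm (-(unitVec d i)) :=
          supNorm_add_le _ _
      _ ≤ supNorm (a - y) + 1 := by
          rw [supNorm_neg]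
          have := supNorm_unitVec_le (d := d) i; omega

lemma connIn_mono_set {ω : PConfig d} {S T : Set (PVert d)} (h : S ⊆ T)
    {x y : PVert d} (hc : connIn ω S x y) : connIn ω T x y :=
  Relation.ReflTransGen.mono (fun a b ⟨ha, hb, hab⟩ => ⟨h ha, h hb, hab⟩) _ _ hc

lemma connIn_mono_cfg {ω ω' : PConfig d} (h : ∀ e, ω e = true → ω' e = true)
    {S : Set (PVert d)} {x y : PVert d} (hc : connIn ω S x y) : connIn ω' S x y :=
  Relation.ReflTransGen.mono (fun a b ⟨ha, hb, hab⟩ => ⟨ha, hb, openAdj_mono h hab⟩) _ _ hc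

lemma connIn_congr_cfg {ω ω' : PConfig d} {S : Set (PVert d)}
    (h : ∀ f : PEdge d, f.1 ∈ S → f.1 + unitVec d f.2 ∈ S → ω f = ω' f)
    {x y : PVert d} (hc : connIn ω S x y) : connIn ω' S x y := by
  refine Relation.ReflTransGen.mono (fun a b hab => ?_) _ _ hc
  obtain ⟨ha, hb, hadj⟩ := hab
  refine ⟨ha, hb, ?_⟩
  obtain ⟨i, hi | hi⟩ := hadj
  · refine ⟨i, Or.inl ⟨hi.1, ?_⟩⟩
    rw [← h (a, i) ha (by rw [← hi.1]; exact hb)]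
    exact hi.2
  · refine ⟨i, Or.inr ⟨hi.1, ?_⟩⟩
    rw [← h (b, i) hb (by rw [← hi.1]; exact ha)]
    exact hi.2

/-- A path from inside `C` to outside `C` has an open crossing. -/
lemma connIn_crossing {ω : PConfig d} {U C : Set (PVert d)} {a b : PVert d}
    (hc : connIn ω U a b) (ha : a ∈ C) (hb : b ∉ C) :
    ∃ u v, u ∈ C ∧ v ∉ C ∧ u ∈ U ∧ v ∈ U ∧ openAdj ω u v := by
  revert ha
  induction hc using Relation.ReflTransGen.head_induction_on with
  | refl => exact fun ha => absurd ha hb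
  | head hstep htail ih =>
    rename_i x c
    obtain ⟨hxU, hcU, hadj⟩ := hstep
    intro haC
    by_cases hcC : c ∈ C
    · exact ih hcC
    · exact ⟨x, c, haC, hcC, hxU, hcU, hadj⟩

/-- A path that never crosses into `C` stays outside of `C`. -/
lemma connIn_stays_out {ω : PConfig d} {U C : Set (PVert d)} {a b : PVert d}
    (hc : connIn ω U a b)
    (hcross : ∀ u v, u ∈ U → v ∈ U → u ∉ C → v ∈ C → ¬ openAdj ω u v)
    (ha : a ∉ C) : connIn ω {u | u ∈ U ∧ u ∉ C} a b := by
  revert ha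
  induction hc using Relation.ReflTransGen.head_induction_on with
  | refl => exact fun _ => Relation.ReflTransGen.refl
  | head hstep htail ih =>
    rename_i x c
    obtain ⟨hxU, hcU, hadj⟩ := hstep
    intro hxC
    by_cases hcC : c ∈ C
    · exact absurd hadj (hcross x c hxU hcU hxC hcC)
    · exact Relation.ReflTransGen.head ⟨⟨hxU, hxC⟩, ⟨hcU, hcC⟩, hadj⟩ (ih hcC)

/-- Last exit decomposition. -/
lemma connIn_last_exit {ω : PConfig d} {U C : Set (PVert d)} {a b : PVert d}
    (hc : connIn ω U a b) (ha : a ∈ C) (hb : b ∉ C) :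
    ∃ z w, z ∈ C ∧ w ∉ C ∧ z ∈ U ∧ w ∈ U ∧ openAdj ω z w ∧
      connIn ω {u | u ∈ U ∧ u ∉ C} w b := by
  induction hc with
  | refl => exact absurd ha hb
  | tail h₁ h₂ ih =>
    rename_i c y
    obtain ⟨hcU, hyU, hadj⟩ := h₂
    by_cases hcC : c ∈ C
    · exact ⟨c, y, hcC, hb, hcU, hyU, hadj, Relation.ReflTransGen.refl⟩
    · obtain ⟨z, w, h1, h2, h3, h4, h5, h6⟩ := ih hcC
      exact ⟨z, w, h1, h2, h3, h4, h5,
        h6.tail ⟨⟨hcU, hcC⟩, ⟨hyU, hb⟩, hadj⟩⟩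

/-- Truncation: a path reaching sup-distance `≥ m` from `y` hits the sphere of radius
`m` around `y` through the ball. -/
lemma connIn_truncate {ω : PConfig d} {U : Set (PVert d)} {a b y : PVert d} {m : ℕ}
    (hc : connIn ω U a b) (ha : supNorm (a - y) ≤ m) (hb : m ≤ supNorm (b - y)) :
    ∃ z, supNorm (z - y) = m ∧ connIn ω {u | supNorm (u - y) ≤ m} a z := by
  revert ha
  induction hc using Relation.ReflTransGen.head_induction_on with
  | refl => exact fun h => ⟨b, le_antisymm h hb, Relation.ReflTransGen.refl⟩
  | head hstep htail ih =>
    rename_i x c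
    obtain ⟨hxU, hcU, hadj⟩ := hstep
    intro hx
    rcases eq_or_lt_of_le hx with heq | hlt
    · exact ⟨x, heq, Relation.ReflTransGen.refl⟩
    · have hc' : supNorm (c - y) ≤ m := by
        have := openAdj_supNorm_le (y := y) hadj
        omega
      obtain ⟨z, hz1, hz2⟩ := ih hc'
      exact ⟨z, hz1, Relation.ReflTransGen.head ⟨le_of_lt hlt, hc', hadj⟩ hz2⟩

end Geometry

section PhiDefs
set_option maxHeartbeats 1000000
set_option synthInstance.maxHeartbeats 400000

open Finset

variable {d : ℕ}

/-- Edges with exactly one endpoint in `S`. -/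
def crossEdges (d : ℕ) (S : Finset (PVert d)) : Finset (PEdge d) :=
  Finset.univ.biUnion (fun i : Fin d =>
    ((S ∪ S.image (fun z => z - unitVec d i)) ×ˢ ({i} : Finset (Fin d))).filter
      (fun f => ¬ (f.1 ∈ S ↔ f.1 + unitVec d f.2 ∈ S)))

lemma mem_crossEdges {S : Finset (PVert d)} {f : PEdge d} :
    f ∈ crossEdges d S ↔ ¬ (f.1 ∈ S ↔ f.1 + unitVec d f.2 ∈ S) := by
  unfold crossEdges
  rw [Finset.mem_biUnion]
  constructor
  · rintro ⟨i, _, hf⟩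
    exact (Finset.mem_filter.mp hf).2
  · intro h
    refine ⟨f.2, Finset.mem_univ _, Finset.mem_filter.mpr ⟨?_, h⟩⟩
    rw [Finset.mem_product]
    refine ⟨?_, Finset.mem_singleton_self _⟩
    rw [Finset.mem_union]
    by_cases h1 : f.1 ∈ S
    · exact Or.inl h1
    · refine Or.inr ?_
      rw [Finset.mem_image]
      have h2 : f.1 + unitVec d f.2 ∈ S := by tauto
      exact ⟨f.1 + unitVec d f.2, h2, by ring⟩

/-- The endpoint of a crossing edge inside `S`. -/
def sEnd (d : ℕ) (S : Finset (PVert d)) (f : PEdge d) : PVert d :=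
  if f.1 ∈ S then f.1 else f.1 + unitVec d f.2

/-- The endpoint of a crossing edge outside `S`. -/
def oEnd (d : ℕ) (S : Finset (PVert d)) (f : PEdge d) : PVert d :=
  if f.1 ∈ S then f.1 + unitVec d f.2 else f.1

lemma sEnd_mem {S : Finset (PVert d)} {f : PEdge d} (hf : f ∈ crossEdges d S) :
    sEnd d S f ∈ S := by
  rw [mem_crossEdges] at hf
  unfold sEnd
  by_cases h : f.1 ∈ S <;> simp [h] <;> tauto

lemma oEnd_not_mem {S : Finset (PVert d)} {f : PEdge d} (hf : f ∈ crossEdges d S) :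
    oEnd d S f ∉ S := by
  rw [mem_crossEdges] at hf
  unfold oEnd
  by_cases h : f.1 ∈ S <;> simp [h] <;> tauto

/-- The DCT quantity `φ_p(S) = p ∑_{(x,y) ∈ ΔS} ℙ_p[0 ↔ x in S]`. -/
noncomputable def phiS (d : ℕ) (p : ℝ) (S : Finset (PVert d)) : ℝ :=
  ∑ f ∈ crossEdges d S, p * cylProb d p (edgesIn d S) (fun ω => connIn ω ↑S 0 (sEnd d S f))

/-- Parameters where some finite set containing the origin has `φ_p(S) < 1`. -/
def Qset (d : ℕ) : Set ℝ :=
  {p | p ∈ Set.Icc (0 : ℝ) 1 ∧ ∃ S : Finset (PVert d), 0 ∈ S ∧ phiS d p S < 1}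

/-- The auxiliary critical point `p̃_c`. -/
noncomputable def ptc (d : ℕ) : ℝ := sSup (Qset d)

/-- Connectivity to the boundary of `Λ_n`, inside `Λ_n`. -/
def connBdry (d : ℕ) (n : ℕ) (ω : PConfig d) (x : PVert d) : Prop :=
  ∃ y, supNorm y = n ∧ connIn ω (box d n) x y

lemma zeroToBoundary_iff {n : ℕ} {ω : PConfig d} :
    zeroToBoundary d n ω ↔ connBdry d n ω 0 := Iff.rfl

lemma connBdry_self {n : ℕ} {ω : PConfig d} {x : PVert d} (h : supNorm x = n) :
    connBdry d n ω x := ⟨x, h, Relation.ReflTransGen.refl⟩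

lemma connBdry_step {n : ℕ} {ω : PConfig d} {x y : PVert d} (hx : supNorm x ≤ n)
    (hy : supNorm y ≤ n) (hadj : openAdj ω x y) (h : connBdry d n ω y) :
    connBdry d n ω x := by
  obtain ⟨z, hz, hc⟩ := h
  exact ⟨z, hz, Relation.ReflTransGen.head ⟨hx, hy, hadj⟩ hc⟩

lemma connBdry_mono {n : ℕ} {ω ω' : PConfig d} (h : ∀ e, ω e = true → ω' e = true)
    {x : PVert d} (hc : connBdry d n ω x) : connBdry d n ω' x := by
  obtain ⟨z, hz, hcc⟩ := hc
  exact ⟨z, hz, connIn_mono_cfg h hcc⟩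

/-- The set `𝒮` of vertices of `Λ_n` not connected to `∂Λ_n`. -/
noncomputable def nconnSet (d : ℕ) (n : ℕ) (ω : PConfig d) : Finset (PVert d) :=
  (boxF d n).filter (fun x => ¬ connBdry d n ω x)

lemma mem_nconnSet {n : ℕ} {ω : PConfig d} {x : PVert d} :
    x ∈ nconnSet d n ω ↔ supNorm x ≤ n ∧ ¬ connBdry d n ω x := by
  unfold nconnSet
  rw [Finset.mem_filter, mem_boxF_iff]

lemma nconnSet_interior {n : ℕ} {ω : PConfig d} {x : PVert d} (h : x ∈ nconnSet d n ω) :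
    supNorm x < n := by
  rw [mem_nconnSet] at h
  rcases lt_or_eq_of_le h.1 with h1 | h1
  · exact h1
  · exact absurd (connBdry_self h1) h.2

/-- Edges crossing out of `𝒮` are closed. -/
lemma nconnSet_cross_closed {n : ℕ} {ω : PConfig d} {f : PEdge d}
    (hf : f ∈ boxEdges d n)
    (hcross : ¬ (f.1 ∈ nconnSet d n ω ↔ f.1 + unitVec d f.2 ∈ nconnSet d n ω)) :
    ω f = false := by
  rw [mem_boxEdges_iff] at hf
  by_contra hopen
  rw [Bool.not_eq_false] at hopen
  have hadj : openAdj ω f.1 (f.1 + unitVec d f.2) := openAdj_of_edge hopen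
  by_cases h1 : f.1 ∈ nconnSet d n ω
  · have h2 : f.1 + unitVec d f.2 ∉ nconnSet d n ω := by tauto
    have hconn2 : connBdry d n ω (f.1 + unitVec d f.2) := by
      by_contra hc
      exact h2 (mem_nconnSet.mpr ⟨hf.2, hc⟩)
    have : connBdry d n ω f.1 := connBdry_step hf.1 hf.2 hadj hconn2
    exact (mem_nconnSet.mp h1).2 this
  · have h2 : f.1 + unitVec d f.2 ∈ nconnSet d n ω := by tauto
    have hconn1 : connBdry d n ω f.1 := by
      by_contra hc
      exact h1 (mem_nconnSet.mpr ⟨hf.1, hc⟩)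
    have : connBdry d n ω (f.1 + unitVec d f.2) :=
      connBdry_step hf.2 hf.1 (openAdj_symm hadj) hconn1
    exact (mem_nconnSet.mp h2).2 this

/-- One-sided dependence of `{𝒮 = S}` on the edges not strictly inside `S`. -/
lemma nconnSet_eq_of_agree {n : ℕ} {S : Finset (PVert d)} {ω ω' : PConfig d}
    (hag : ∀ f ∈ boxEdges d n \ edgesIn d S, ω f = ω' f)
    (hS : nconnSet d n ω = S) : nconnSet d n ω' = S := by
  -- crossing edges of S are closed in ω and hence in ω'
  have hclosed : ∀ f ∈ boxEdges d n, ¬ (f.1 ∈ S ↔ f.1 + unitVec d f.2 ∈ S) →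
      ω f = false ∧ ω' f = false := by
    intro f hf hcr
    have h1 : ω f = false := nconnSet_cross_closed hf (by rw [hS]; exact hcr)
    have h2 : ω f = ω' f := by
      apply hag
      rw [Finset.mem_sdiff]
      refine ⟨hf, ?_⟩
      rw [mem_edgesIn_iff]
      tauto
    exact ⟨h1, h2 ▸ h1⟩
  have hSbox : ∀ x ∈ S, supNorm x ≤ n := by
    intro x hx
    rw [← hS, mem_nconnSet] at hx
    exact hx.1
  -- no open crossing in either configuration
  have hnocross : ∀ (σ : PConfig d), (∀ f ∈ boxEdges d n,
        ¬ (f.1 ∈ S ↔ f.1 + unitVec d f.2 ∈ S) → σ f = false) →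
      ∀ u v, u ∈ box d n → v ∈ box d n → ¬ (u ∈ S ↔ v ∈ S) → ¬ openAdj σ u v := by
    intro σ hcl u v hu hv hcr hadj
    obtain ⟨f, hfopen, hfend⟩ := openAdj_edge hadj
    have hfbox : f ∈ boxEdges d n := by
      rw [mem_boxEdges_iff]
      rcases hfend with ⟨h1, h2⟩ | ⟨h1, h2⟩ <;>
        [exact ⟨h1 ▸ hu, h2 ▸ hv⟩; exact ⟨h1 ▸ hv, h2 ▸ hu⟩]
    have : σ f = false := by
      apply hcl f hfbox
      rcases hfend with ⟨h1, h2⟩ | ⟨h1, h2⟩ <;> rw [h2, h1] <;> tauto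
    rw [this] at hfopen
    exact absurd hfopen (by simp)
  have hωcl : ∀ f ∈ boxEdges d n, ¬ (f.1 ∈ S ↔ f.1 + unitVec d f.2 ∈ S) → ω f = false :=
    fun f hf hc => (hclosed f hf hc).1
  have hω'cl : ∀ f ∈ boxEdges d n, ¬ (f.1 ∈ S ↔ f.1 + unitVec d f.2 ∈ S) → ω' f = false :=
    fun f hf hc => (hclosed f hf hc).2
  -- memberships transfer
  ext x
  rw [mem_nconnSet, ← hS, mem_nconnSet]
  constructor
  · -- x ∈ 𝒮(ω') → x ∈ 𝒮(ω)
    rintro ⟨hx1, hx2⟩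
    refine ⟨hx1, fun hc => ?_⟩
    by_cases hxS : x ∈ S
    · have : x ∈ nconnSet d n ω := hS.symm ▸ hxS
      exact (mem_nconnSet.mp this).2 hc
    · -- transfer the ω-path to ω'
      refine hx2 ?_
      obtain ⟨z, hz, hcz⟩ := hc
      have hout : connIn ω {u | u ∈ box d n ∧ u ∉ ↑S} x z := by
        refine connIn_stays_out hcz ?_ (by simpa using hxS)
        intro u v hu hv huS hvS
        refine hnocross ω hωcl u v hu hv ?_
        simp only [Finset.mem_coe] at huS hvS
        tauto
      have hout' : connIn ω' {u | u ∈ box d n ∧ u ∉ ↑S} x z := by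
        refine connIn_congr_cfg ?_ hout
        intro f hf1 hf2
        apply hag
        rw [Finset.mem_sdiff, mem_boxEdges_iff, mem_edgesIn_iff]
        simp only [Set.mem_setOf_eq] at hf1 hf2
        refine ⟨⟨hf1.1, hf2.1⟩, ?_⟩
        intro hmem
        exact hf1.2 (by exact_mod_cast hmem.1)
      exact ⟨z, hz, connIn_mono_set (fun u hu => hu.1) hout'⟩
  · -- x ∈ 𝒮(ω) → x ∈ 𝒮(ω')
    rintro ⟨hx1, hx2⟩
    refine ⟨hx1, fun hc => ?_⟩
    by_cases hxS : x ∈ S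
    · -- a ω'-path to the boundary would open a crossing edge of S
      obtain ⟨z, hz, hcz⟩ := hc
      have hzS : z ∉ (↑S : Set (PVert d)) := by
        intro hzmem
        simp only [Finset.mem_coe] at hzmem
        rw [← hS, mem_nconnSet] at hzmem
        exact hzmem.2 (connBdry_self hz)
      obtain ⟨u, v, huS, hvS, huU, hvU, hadj⟩ :=
        connIn_crossing hcz (show x ∈ (↑S : Set (PVert d)) by simpa using hxS) hzS
      simp only [Finset.mem_coe] at huS hvS
      exact hnocross ω' hω'cl u v huU hvU (by tauto) hadj
    · exact hxS (hS ▸ mem_nconnSet.mpr ⟨hx1, hx2⟩)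

/-- `{𝒮 = S}` depends only on the edges of `E_n` not strictly inside `S`. -/
lemma nconnSet_depOn (n : ℕ) (S : Finset (PVert d)) :
    DepOn (fun ω => nconnSet d n ω = S) (boxEdges d n \ edgesIn d S) := by
  intro ω ω' hag
  constructor
  · exact nconnSet_eq_of_agree hag
  · exact nconnSet_eq_of_agree (fun f hf => (hag f hf).symm)

end PhiDefs

section Hard2
set_option maxHeartbeats 1000000
set_option synthInstance.maxHeartbeats 400000

open Finset

variable {d : ℕ} {p : ℝ}

lemma cylProb_diff (h0 : 0 ≤ p) (h1 : p ≤ 1) {E : Finset (PEdge d)}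
    {A B : PConfig d → Prop} (h : ∀ ω, A ω → B ω) :
    cylProb d p E B - cylProb d p E A = cylProb d p E (fun ω => B ω ∧ ¬ A ω) := by
  rw [cylProb_eq_sum_powerset, cylProb_eq_sum_powerset, cylProb_eq_sum_powerset,
    ← Finset.sum_sub_distrib]
  refine Finset.sum_congr rfl fun s _ => ?_
  have : Ind (B (scfg s) ∧ ¬ A (scfg s)) = Ind (B (scfg s)) - Ind (A (scfg s)) := by
    by_cases hA : A (scfg s)
    · rw [Ind_true hA, Ind_true (h _ hA), Ind_false (by tauto)]; ring
    · rw [Ind_false hA, Ind_congr (show (B (scfg s) ∧ ¬ A (scfg s)) ↔ B (scfg s) by tauto)]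
      ring
  rw [this]; ring

lemma update_true_mono (ω : PConfig d) (e : PEdge d) :
    ∀ f, ω f = true → Function.update ω e true f = true := by
  intro f hf
  by_cases h : f = e
  · subst h; rw [Function.update_self]
  · rw [Function.update_of_ne h]; exact hf

lemma update_false_le (ω : PConfig d) (e : PEdge d) :
    ∀ f, Function.update ω e false f = true → ω f = true := by
  intro f hf
  by_cases h : f = e
  · subst h; rw [Function.update_self] at hf; exact absurd hf (by simp)
  · rw [Function.update_of_ne h] at hf; exact hf

lemma zeroToBoundary_mono {n : ℕ} {ω ω' : PConfig d} (h : ∀ e, ω e = true → ω' e = true) :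
    zeroToBoundary d n ω → zeroToBoundary d n ω' := by
  intro hA
  rw [zeroToBoundary_iff] at hA ⊢
  exact connBdry_mono h hA

lemma connInS_depOn (S : Finset (PVert d)) (a b : PVert d) :
    DepOn (fun ω => connIn ω ↑S a b) (edgesIn d S) := by
  intro ω ω' hag
  constructor <;> intro h <;> refine connIn_congr_cfg ?_ h <;> intro f h1 h2
  · exact hag f (mem_edgesIn_iff.mpr ⟨by exact_mod_cast h1, by exact_mod_cast h2⟩)
  · exact (hag f (mem_edgesIn_iff.mpr ⟨by exact_mod_cast h1, by exact_mod_cast h2⟩)).symm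

lemma openAdj_sEnd_oEnd {S : Finset (PVert d)} {f : PEdge d} {σ : PConfig d}
    (hσ : σ f = true) : openAdj σ (sEnd d S f) (oEnd d S f) := by
  unfold sEnd oEnd
  by_cases h : f.1 ∈ S
  · rw [if_pos h, if_pos h]; exact openAdj_of_edge hσ
  · rw [if_neg h, if_neg h]; exact openAdj_symm (openAdj_of_edge hσ)

lemma supNorm_oEnd_le {S : Finset (PVert d)} (f : PEdge d) :
    supNorm (oEnd d S f) ≤ supNorm (sEnd d S f) + 1 := by
  unfold sEnd oEnd
  by_cases h : f.1 ∈ S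
  · rw [if_pos h, if_pos h]
    calc supNorm (f.1 + unitVec d f.2) ≤ supNorm f.1 + supNorm (unitVec d f.2) :=
        supNorm_add_le _ _
      _ ≤ supNorm f.1 + 1 := by have := supNorm_unitVec_le (d := d) f.2; omega
  · rw [if_neg h, if_neg h]
    have h2 : f.1 = (f.1 + unitVec d f.2) + (-(unitVec d f.2)) := by ring
    calc supNorm f.1 = supNorm ((f.1 + unitVec d f.2) + (-(unitVec d f.2))) :=
          congrArg supNorm h2
      _ ≤ supNorm (f.1 + unitVec d f.2) + supNorm (-(unitVec d f.2)) := supNorm_add_le _ _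
      _ ≤ supNorm (f.1 + unitVec d f.2) + 1 := by
          rw [supNorm_neg]
          have := supNorm_unitVec_le (d := d) f.2; omega

lemma crossEdges_subset_boxEdges {n : ℕ} {S : Finset (PVert d)}
    (hint : ∀ x ∈ S, supNorm x < n) : crossEdges d S ⊆ boxEdges d n := by
  intro f hf
  have hs := sEnd_mem hf
  have hsn : supNorm (sEnd d S f) < n := hint _ hs
  have hon : supNorm (oEnd d S f) ≤ n := by
    have := supNorm_oEnd_le (S := S) f
    omega
  rw [mem_boxEdges_iff]
  unfold sEnd at hsn
  unfold oEnd at hon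
  by_cases h : f.1 ∈ S
  · rw [if_pos h] at hsn; rw [if_pos h] at hon
    exact ⟨by omega, hon⟩
  · rw [if_neg h] at hsn; rw [if_neg h] at hon
    exact ⟨hon, by omega⟩

/-- Pivotality: on `{𝒮 = S} ∩ {0 ↔_S x_e}`, the crossing edge `e` is pivotal. -/
lemma pivotal_inclusion {n : ℕ} {S : Finset (PVert d)} {f : PEdge d} {ω : PConfig d}
    (hint : ∀ x ∈ S, supNorm x < n) (hf : f ∈ crossEdges d S)
    (hS : nconnSet d n ω = S) (hc : connIn ω ↑S 0 (sEnd d S f)) :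
    zeroToBoundary d n (Function.update ω f true)
      ∧ ¬ zeroToBoundary d n (Function.update ω f false) := by
  have hSbox : (↑S : Set (PVert d)) ⊆ box d n := by
    intro u hu
    simp only [Finset.mem_coe] at hu
    exact le_of_lt (hint u hu)
  have h0S : 0 ∈ S := by
    rcases Relation.ReflTransGen.cases_head hc with heq | ⟨c, hstep, _⟩
    · rw [heq]; exact sEnd_mem hf
    · exact_mod_cast hstep.1
  constructor
  · -- the origin connects to the boundary after opening f
    set σ := Function.update ω f true with hσdef
    have hσf : σ f = true := Function.update_self _ _ _
    have path1 : connIn σ (box d n) 0 (sEnd d S f) :=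
      connIn_mono_set hSbox (connIn_mono_cfg (update_true_mono ω f) hc)
    have hsb : sEnd d S f ∈ box d n := hSbox (by exact_mod_cast sEnd_mem hf)
    have hob : oEnd d S f ∈ box d n := by
      rw [mem_box_iff]
      have h1 := supNorm_oEnd_le (S := S) f
      have h2 : supNorm (sEnd d S f) < n := hint _ (sEnd_mem hf)
      omega
    have hadj : openAdj σ (sEnd d S f) (oEnd d S f) := openAdj_sEnd_oEnd hσf
    -- oEnd is connected to the boundary in ω
    have ho : connBdry d n ω (oEnd d S f) := by
      have : oEnd d S f ∉ nconnSet d n ω := by rw [hS]; exact oEnd_not_mem hf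
      rw [mem_nconnSet] at this
      push_neg at this
      exact this (mem_box_iff.mp hob)
    obtain ⟨b, hb, hcb⟩ := connBdry_mono (update_true_mono ω f) ho
    refine ⟨b, hb, ?_⟩
    exact path1.trans (Relation.ReflTransGen.head ⟨hsb, hob, hadj⟩ hcb)
  · -- the origin is not connected even before closing f
    intro hA
    have hA' : zeroToBoundary d n ω := zeroToBoundary_mono (update_false_le ω f) hA
    have : 0 ∈ nconnSet d n ω := hS.symm ▸ h0S
    exact (mem_nconnSet.mp this).2 hA'

/-- The key differential inequality (DCT):  if `φ_p(S) ≥ 1` for all finite `S ∋ 0`,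
then the Russo sum for `{0 ↔ ∂Λ_n}` is at least `1 - θ_n(p)`. -/
lemma russoSum_ge (n : ℕ) (h0 : 0 ≤ p) (h1 : p ≤ 1)
    (hphi : ∀ S : Finset (PVert d), 0 ∈ S → 1 ≤ phiS d p S) :
    1 - theta d p n ≤
      ∑ e ∈ boxEdges d n, (cylProb d p (boxEdges d n) (force e true (zeroToBoundary d n))
        - cylProb d p (boxEdges d n) (force e false (zeroToBoundary d n))) := by
  classical
  set E := boxEdges d n with hE
  set A := zeroToBoundary d n with hA
  set P := (boxF d n).powerset.filter (fun S => 0 ∈ S ∧ ∀ x ∈ S, supNorm x < n) with hP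
  have hPmem : ∀ S ∈ P, 0 ∈ S ∧ S ⊆ boxF d n ∧ ∀ x ∈ S, supNorm x < n := by
    intro S hSP
    rw [hP, Finset.mem_filter, Finset.mem_powerset] at hSP
    exact ⟨hSP.2.1, hSP.1, hSP.2.2⟩
  -- Step 1: 1 - θ_n ≤ ∑_{S ∈ P} ℙ[𝒮 = S]
  have step1 : 1 - theta d p n ≤ ∑ S ∈ P, cylProb d p E (fun ω => nconnSet d n ω = S) := by
    have : (1 : ℝ) - theta d p n = cylProb d p E (fun ω => ¬ A ω) := by
      rw [cylProb_compl]; rfl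
    rw [this]
    refine cylProb_le_sum h0 h1 ?_
    intro ω hω
    refine ⟨nconnSet d n ω, ?_, rfl⟩
    rw [hP, Finset.mem_filter, Finset.mem_powerset]
    refine ⟨Finset.filter_subset _ _, ?_, fun x hx => nconnSet_interior hx⟩
    rw [mem_nconnSet]
    exact ⟨by rw [supNorm_zero]; omega, hω⟩
  -- Step 2: per S, ℙ[𝒮 = S] ≤ ∑_{f ∈ ΔS} ℙ[{𝒮 = S} ∩ {0 ↔_S x_f}]
  have step2 : ∀ S ∈ P, cylProb d p E (fun ω => nconnSet d n ω = S)
      ≤ ∑ f ∈ crossEdges d S,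
          cylProb d p E (fun ω => nconnSet d n ω = S ∧ connIn ω ↑S 0 (sEnd d S f)) := by
    intro S hSP
    obtain ⟨h0S, hSsub, hSint⟩ := hPmem S hSP
    have hTsub : edgesIn d S ⊆ E := by
      rw [hE]; unfold boxEdges; exact edgesIn_mono hSsub
    have hfact : ∀ f ∈ crossEdges d S,
        cylProb d p E (fun ω => nconnSet d n ω = S ∧ connIn ω ↑S 0 (sEnd d S f))
          = cylProb d p E (fun ω => nconnSet d n ω = S)
            * cylProb d p (edgesIn d S) (fun ω => connIn ω ↑S 0 (sEnd d S f)) := by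
      intro f hf
      have hunion : (E \ edgesIn d S) ∪ edgesIn d S = E := by
        rw [Finset.sdiff_union_of_subset hTsub]
      have hdisj : Disjoint (E \ edgesIn d S) (edgesIn d S) := Finset.sdiff_disjoint
      calc cylProb d p E (fun ω => nconnSet d n ω = S ∧ connIn ω ↑S 0 (sEnd d S f))
          = cylProb d p ((E \ edgesIn d S) ∪ edgesIn d S)
              (fun ω => nconnSet d n ω = S ∧ connIn ω ↑S 0 (sEnd d S f)) := by rw [hunion]
        _ = cylProb d p (E \ edgesIn d S) (fun ω => nconnSet d n ω = S)
              * cylProb d p (edgesIn d S) (fun ω => connIn ω ↑S 0 (sEnd d S f)) :=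
            cylProb_mul_of_depOn hdisj (nconnSet_depOn n S) (connInS_depOn S _ _)
        _ = cylProb d p E (fun ω => nconnSet d n ω = S)
              * cylProb d p (edgesIn d S) (fun ω => connIn ω ↑S 0 (sEnd d S f)) := by
            rw [cylProb_depOn_congr (Finset.sdiff_subset) (nconnSet_depOn n S)]
    have hphiS := hphi S h0S
    have hprob0 : 0 ≤ cylProb d p E (fun ω => nconnSet d n ω = S) :=
      cylProb_nonneg h0 h1 _ _
    calc cylProb d p E (fun ω => nconnSet d n ω = S)
        ≤ cylProb d p E (fun ω => nconnSet d n ω = S) * phiS d p S := by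
          nlinarith [mul_le_mul_of_nonneg_left hphiS hprob0]
      _ = ∑ f ∈ crossEdges d S, cylProb d p E (fun ω => nconnSet d n ω = S)
            * (p * cylProb d p (edgesIn d S) (fun ω => connIn ω ↑S 0 (sEnd d S f))) := by
          unfold phiS; rw [Finset.mul_sum]
      _ ≤ ∑ f ∈ crossEdges d S, cylProb d p E (fun ω => nconnSet d n ω = S)
            * cylProb d p (edgesIn d S) (fun ω => connIn ω ↑S 0 (sEnd d S f)) := by
          refine Finset.sum_le_sum fun f hf => ?_
          have hc0 : 0 ≤ cylProb d p (edgesIn d S) (fun ω => connIn ω ↑S 0 (sEnd d S f)) :=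
            cylProb_nonneg h0 h1 _ _
          nlinarith [mul_le_mul_of_nonneg_left (mul_le_mul_of_nonneg_right h1 hc0) hprob0]
      _ = ∑ f ∈ crossEdges d S,
            cylProb d p E (fun ω => nconnSet d n ω = S ∧ connIn ω ↑S 0 (sEnd d S f)) := by
          refine Finset.sum_congr rfl fun f hf => (hfact f hf).symm
  -- Step 3: reorganize the double sum over edges and bound by the Russo sum
  have step3 : ∑ S ∈ P, ∑ f ∈ crossEdges d S,
        cylProb d p E (fun ω => nconnSet d n ω = S ∧ connIn ω ↑S 0 (sEnd d S f))
      ≤ ∑ e ∈ E, (cylProb d p E (force e true A) - cylProb d p E (force e false A)) := by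
    have hsw : ∑ S ∈ P, ∑ f ∈ crossEdges d S,
          cylProb d p E (fun ω => nconnSet d n ω = S ∧ connIn ω ↑S 0 (sEnd d S f))
        = ∑ e ∈ E, ∑ S ∈ P.filter (fun S => e ∈ crossEdges d S),
            cylProb d p E (fun ω => nconnSet d n ω = S ∧ connIn ω ↑S 0 (sEnd d S e)) := by
      have h1' : ∀ S ∈ P, ∑ f ∈ crossEdges d S,
            cylProb d p E (fun ω => nconnSet d n ω = S ∧ connIn ω ↑S 0 (sEnd d S f))
          = ∑ f ∈ E, if f ∈ crossEdges d S then
              cylProb d p E (fun ω => nconnSet d n ω = S ∧ connIn ω ↑S 0 (sEnd d S f))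
            else 0 := by
        intro S hSP
        rw [Finset.sum_ite_mem]
        congr 1
        rw [Finset.inter_eq_right.mpr (crossEdges_subset_boxEdges (hPmem S hSP).2.2)]
      rw [Finset.sum_congr rfl h1', Finset.sum_comm]
      refine Finset.sum_congr rfl fun e he => ?_
      exact (Finset.sum_filter (fun S => e ∈ crossEdges d S)
        (fun S => cylProb d p E (fun ω => nconnSet d n ω = S ∧ connIn ω ↑S 0 (sEnd d S e)))).symm
    rw [hsw]
    refine Finset.sum_le_sum fun e heE => ?_
    -- for fixed e, the disjoint events are subevents of the pivotal difference
    have hdiff : cylProb d p E (force e true A) - cylProb d p E (force e false A)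
        = cylProb d p E (fun ω => force e true A ω ∧ ¬ force e false A ω) := by
      refine cylProb_diff h0 h1 ?_
      intro ω hω
      unfold force at hω ⊢
      refine zeroToBoundary_mono ?_ hω
      intro f hf
      by_cases hfe : f = e
      · subst hfe; rw [Function.update_self]
      · rw [Function.update_of_ne hfe] at hf ⊢; exact hf
    rw [hdiff]
    refine sum_le_cylProb h0 h1 ?_ ?_
    · intro S hSP ω hω
      rw [Finset.mem_filter] at hSP
      obtain ⟨hSP, heS⟩ := hSP
      have := pivotal_inclusion (hPmem S hSP).2.2 heS hω.1 hω.2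
      exact ⟨this.1, this.2⟩
    · intro S hS T hT hne ω hω hω'
      exact hne (hω.1 ▸ hω'.1 ▸ rfl)
  calc 1 - theta d p n ≤ ∑ S ∈ P, cylProb d p E (fun ω => nconnSet d n ω = S) := step1
    _ ≤ ∑ S ∈ P, ∑ f ∈ crossEdges d S,
          cylProb d p E (fun ω => nconnSet d n ω = S ∧ connIn ω ↑S 0 (sEnd d S f)) :=
        Finset.sum_le_sum step2
    _ ≤ ∑ e ∈ E, (cylProb d p E (force e true A) - cylProb d p E (force e false A)) := step3

end Hard2

section Analysis
set_option maxHeartbeats 1000000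
set_option synthInstance.maxHeartbeats 400000

open Finset

variable {d : ℕ}

lemma phiS_zero (S : Finset (PVert d)) : phiS d 0 S = 0 := by
  unfold phiS
  exact Finset.sum_eq_zero fun f _ => zero_mul _

lemma zero_mem_Qset (d : ℕ) : (0 : ℝ) ∈ Qset d := by
  refine ⟨⟨le_refl 0, zero_le_one⟩, ⟨{0}, Finset.mem_singleton_self 0, ?_⟩⟩
  rw [phiS_zero]; norm_num

lemma Qset_bddAbove (d : ℕ) : BddAbove (Qset d) := ⟨1, fun q hq => hq.1.2⟩

lemma ptc_nonneg (d : ℕ) : 0 ≤ ptc d := le_csSup (Qset_bddAbove d) (zero_mem_Qset d)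

lemma phiS_ge_of_gt_ptc {r : ℝ} (hr : ptc d < r) (hr1 : r ≤ 1) :
    ∀ S : Finset (PVert d), 0 ∈ S → 1 ≤ phiS d r S := by
  have hr0 : 0 ≤ r := le_of_lt (lt_of_le_of_lt (ptc_nonneg d) hr)
  have hnot : r ∉ Qset d := fun hmem => absurd (le_csSup (Qset_bddAbove d) hmem) (not_le.mpr hr)
  intro S h0S
  by_contra hlt
  push_neg at hlt
  exact hnot ⟨⟨hr0, hr1⟩, S, h0S, hlt⟩

/-- The Russo sum for `θ_n`. -/
noncomputable def russoSum (d : ℕ) (p : ℝ) (n : ℕ) : ℝ :=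
  ∑ e ∈ boxEdges d n, (cylProb d p (boxEdges d n) (force e true (zeroToBoundary d n))
    - cylProb d p (boxEdges d n) (force e false (zeroToBoundary d n)))

lemma theta_hasDerivAt (n : ℕ) (p : ℝ) :
    HasDerivAt (fun q => theta d q n) (russoSum d p n) p :=
  hasDerivAt_cylProb (boxEdges d n) (zeroToBoundary d n) p

lemma one_sub_theta_le_exp {p q : ℝ} (n : ℕ) (hq : ptc d < q) (hqp : q ≤ p) (hp1 : p ≤ 1) :
    1 - theta d p n ≤ Real.exp (q - p) := by
  have hq0 : 0 ≤ q := le_of_lt (lt_of_le_of_lt (ptc_nonneg d) hq)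
  set g : ℝ → ℝ := fun r => (1 - theta d r n) * Real.exp r with hgdef
  have hg : ∀ r : ℝ, HasDerivAt g ((-(russoSum d r n)) * Real.exp r
      + (1 - theta d r n) * Real.exp r) r := by
    intro r
    exact ((theta_hasDerivAt n r).const_sub 1).mul (Real.hasDerivAt_exp r)
  have hdiff : Differentiable ℝ g := fun r => (hg r).differentiableAt
  have hanti : AntitoneOn g (Set.Icc q p) := by
    refine antitoneOn_of_deriv_nonpos (convex_Icc q p) hdiff.continuous.continuousOn
      hdiff.differentiableOn ?_
    intro r hr
    rw [interior_Icc] at hr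
    have hr1 : ptc d < r := lt_trans hq hr.1
    have hr2 : r ≤ 1 := le_of_lt (lt_of_lt_of_le hr.2 hp1)
    have hr0 : 0 ≤ r := le_of_lt (lt_of_le_of_lt (ptc_nonneg d) hr1)
    have hineq := russoSum_ge (d := d) n hr0 hr2 (phiS_ge_of_gt_ptc hr1 hr2)
    rw [(hg r).deriv]
    have hexp := Real.exp_pos r
    have hineq' : 1 - theta d r n ≤ russoSum d r n := hineq
    nlinarith
  have hmem_q : q ∈ Set.Icc q p := ⟨le_refl q, hqp⟩
  have hmem_p : p ∈ Set.Icc q p := ⟨hqp, le_refl p⟩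
  have hgle := hanti hmem_q hmem_p hqp
  have hθq : 0 ≤ theta d q n := cylProb_nonneg hq0 (le_trans hqp hp1) _ _
  have h2 : (1 - theta d p n) * Real.exp p ≤ Real.exp q := by
    calc (1 - theta d p n) * Real.exp p = g p := rfl
      _ ≤ g q := hgle
      _ ≤ Real.exp q := by
          have := Real.exp_pos q
          simp only [hgdef]
          nlinarith
  rw [Real.exp_sub]
  rw [le_div_iff₀ (Real.exp_pos p)]
  exact h2

lemma exp_le_exp_add {s t : ℝ} (hst : s ≤ t) (ht : t ≤ 0) :
    Real.exp t ≤ Real.exp s + (t - s) := by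
  have h1 : (s - t) + 1 ≤ Real.exp (s - t) := Real.add_one_le_exp _
  have h2 : Real.exp t ≤ 1 := by
    calc Real.exp t ≤ Real.exp 0 := Real.exp_le_exp.mpr ht
      _ = 1 := Real.exp_zero
  have h3 : Real.exp s = Real.exp t * Real.exp (s - t) := by
    rw [← Real.exp_add]; ring_nf
  nlinarith [Real.exp_pos t, Real.exp_pos (s - t)]

lemma theta_ge_of_gt_ptc {p : ℝ} (n : ℕ) (hp : ptc d < p) (hp1 : p ≤ 1) :
    1 - Real.exp (ptc d - p) ≤ theta d p n := by
  have key : ∀ ε > (0 : ℝ), 1 - theta d p n ≤ Real.exp (ptc d - p) + ε := by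
    intro ε hε
    set q := min (ptc d + ε) p with hqdef
    have hq1 : ptc d < q := lt_min (by linarith) hp
    have hq2 : q ≤ p := min_le_right _ _
    have h1 : 1 - theta d p n ≤ Real.exp (q - p) := one_sub_theta_le_exp n hq1 hq2 hp1
    have h2 : Real.exp (q - p) ≤ Real.exp (ptc d - p) + ((q - p) - (ptc d - p)) := by
      refine exp_le_exp_add (by linarith) (by linarith)
    have h3 : q - ptc d ≤ ε := by
      have := min_le_left (ptc d + ε) p
      simp only [hqdef]
      linarith [min_le_left (ptc d + ε) p]
    linarith
  have h4 : 1 - theta d p n ≤ Real.exp (ptc d - p) := by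
    by_contra hcon
    push_neg at hcon
    obtain ⟨ε, hε, hlt⟩ : ∃ ε > (0:ℝ), Real.exp (ptc d - p) + ε < 1 - theta d p n :=
      ⟨(1 - theta d p n - Real.exp (ptc d - p)) / 2, by linarith, by linarith⟩
    exact absurd (key ε hε) (not_le.mpr hlt)
  linarith

lemma probZeroToInfty_ge_of_gt_ptc {p : ℝ} (hp : ptc d < p) (hp1 : p ≤ 1) :
    1 - Real.exp (ptc d - p) ≤ probZeroToInfty d p := by
  unfold probZeroToInfty
  exact le_ciInf fun n => theta_ge_of_gt_ptc n hp hp1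

lemma linearize_exp {u : ℝ} (h0 : 0 ≤ u) (h1 : u ≤ 1) :
    (1 - Real.exp (-1)) * u ≤ 1 - Real.exp (-u) := by
  have hconv := convexOn_exp.2 (Set.mem_univ (0 : ℝ)) (Set.mem_univ (-1 : ℝ))
    (by linarith : (0:ℝ) ≤ 1 - u) h0 (by ring : (1 - u) + u = 1)
  simp only [smul_eq_mul, mul_zero, mul_neg, mul_one, zero_add, Real.exp_zero] at hconv
  have : Real.exp (-u) ≤ (1 - u) + u * Real.exp (-1) := by
    convert hconv using 2 <;> ring
  nlinarith

end Analysis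

section Shift
set_option maxHeartbeats 1000000
set_option synthInstance.maxHeartbeats 400000

open Finset

variable {d : ℕ} {p : ℝ}

/-- Translation of an edge. -/
def eshift (t : PVert d) (f : PEdge d) : PEdge d := (f.1 + t, f.2)

lemma eshift_eshift (t : PVert d) (f : PEdge d) : eshift t (eshift (-t) f) = f := by
  unfold eshift; simp

lemma eshift_eshift' (t : PVert d) (f : PEdge d) : eshift (-t) (eshift t f) = f := by
  unfold eshift; simp

lemma eshift_injective (t : PVert d) : Function.Injective (eshift t) := by
  intro f g h
  have := congrArg (eshift (-t)) h
  rwa [eshift_eshift', eshift_eshift'] at this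

lemma image_eshift_image_eshift (t : PVert d) (s : Finset (PEdge d)) :
    (s.image (eshift t)).image (eshift (-t)) = s := by
  rw [Finset.image_image]
  have : eshift (-t) ∘ eshift t = id := funext (eshift_eshift' t)
  rw [this, Finset.image_id]

lemma image_eshift_image_eshift' (t : PVert d) (s : Finset (PEdge d)) :
    (s.image (eshift (-t))).image (eshift t) = s := by
  rw [Finset.image_image]
  have : eshift t ∘ eshift (-t) = id := funext (eshift_eshift t)
  rw [this, Finset.image_id]

/-- Translation invariance of cylinder probabilities. -/
lemma cylProb_shift (t : PVert d) (E : Finset (PEdge d)) (A : PConfig d → Prop) :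
    cylProb d p (E.image (eshift t)) (fun ω => A (fun f => ω (eshift t f)))
      = cylProb d p E A := by
  classical
  rw [cylProb_eq_sum_powerset, cylProb_eq_sum_powerset]
  refine Finset.sum_nbij' (i := fun s => s.image (eshift (-t)))
    (j := fun s => s.image (eshift t)) ?_ ?_ ?_ ?_ ?_
  · intro s hs
    rw [Finset.mem_powerset] at hs ⊢
    intro x hx
    rw [Finset.mem_image] at hx
    obtain ⟨f, hf, rfl⟩ := hx
    obtain ⟨g, hg, rfl⟩ := Finset.mem_image.mp (hs hf)
    rw [eshift_eshift']
    exact hg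
  · intro s hs
    rw [Finset.mem_powerset] at hs ⊢
    exact Finset.image_subset_image hs
  · intro s _
    exact image_eshift_image_eshift' t s
  · intro s _
    exact image_eshift_image_eshift t s
  · intro s hs
    rw [Finset.mem_powerset] at hs
    set u := s.image (eshift (-t)) with hu
    have hsu : s = u.image (eshift t) := (image_eshift_image_eshift' t s).symm
    have hcard : (u.image (eshift t)).card = u.card :=
      Finset.card_image_of_injective u (eshift_injective t)
    have hsd : (E.image (eshift t)) \ (u.image (eshift t)) = (E \ u).image (eshift t) :=
      (Finset.image_sdiff E u (eshift_injective t)).symm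
    have hcfg : (fun f => scfg (u.image (eshift t)) (eshift t f)) = scfg u := by
      funext f
      simp only [scfg]
      congr 1
      simp only [eq_iff_iff]
      constructor
      · intro hmem
        obtain ⟨g, hg, heq⟩ := Finset.mem_image.mp hmem
        rwa [← eshift_injective t heq]
      · intro hmem
        exact Finset.mem_image_of_mem _ hmem
    rw [hsu]
    congr 1
    · unfold pw
      rw [hcard, hsd, Finset.card_image_of_injective _ (eshift_injective t)]
    · exact congrArg (fun c => Ind (A c)) hcfg
end Shift

section ShiftEvents
set_option maxHeartbeats 1000000
set_option synthInstance.maxHeartbeats 400000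

open Finset

variable {d : ℕ} {p : ℝ}

lemma openAdj_shift {t : PVert d} {ω : PConfig d} {a b : PVert d} :
    openAdj (fun f => ω (eshift t f)) a b ↔ openAdj ω (a + t) (b + t) := by
  unfold openAdj eshift
  constructor
  · rintro ⟨i, ⟨h1, h2⟩ | ⟨h1, h2⟩⟩
    · exact ⟨i, Or.inl ⟨by rw [h1]; ring, h2⟩⟩
    · exact ⟨i, Or.inr ⟨by rw [h1]; ring, h2⟩⟩
  · rintro ⟨i, ⟨h1, h2⟩ | ⟨h1, h2⟩⟩
    · refine ⟨i, Or.inl ⟨?_, h2⟩⟩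
      have h1' : b + t = (a + unitVec d i) + t := by rw [h1]; ring
      exact add_right_cancel h1'
    · refine ⟨i, Or.inr ⟨?_, h2⟩⟩
      have h1' : a + t = (b + unitVec d i) + t := by rw [h1]; ring
      exact add_right_cancel h1'

/-- The event `{y ↔ y + ∂Λ_m}` within the translated box. -/
def transBdryEvent (d : ℕ) (m : ℕ) (y : PVert d) (ω : PConfig d) : Prop :=
  ∃ z, supNorm (z - y) = m ∧ connIn ω {u | supNorm (u - y) ≤ m} y z

lemma transBdryEvent_iff_shift (m : ℕ) (y : PVert d) (ω : PConfig d) :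
    transBdryEvent d m y ω ↔ zeroToBoundary d m (fun f => ω (eshift y f)) := by
  unfold transBdryEvent zeroToBoundary
  constructor
  · rintro ⟨z, hz, hc⟩
    refine ⟨z - y, by simpa using hz, ?_⟩
    -- pull the path back by -y
    have hlift : ∀ u v : PVert d, (u ∈ {u | supNorm (u - y) ≤ m} ∧ v ∈ {u | supNorm (u - y) ≤ m}
        ∧ openAdj ω u v) →
        ((u - y) ∈ box d m ∧ (v - y) ∈ box d m ∧ openAdj (fun f => ω (eshift y f)) (u - y) (v - y)) := by
      rintro u v ⟨hu, hv, hadj⟩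
      refine ⟨hu, hv, ?_⟩
      rw [openAdj_shift]
      have h1 : u - y + y = u := by ring
      have h2 : v - y + y = v := by ring
      rw [h1, h2]
      exact hadj
    have hres : connIn (fun f => ω (eshift y f)) (box d m) (y - y) (z - y) :=
      Relation.ReflTransGen.lift (p := fun a b => a ∈ box d m ∧ b ∈ box d m ∧ openAdj (fun f => ω (eshift y f)) a b) (f := fun u => u - y) (fun a b h => hlift a b h) _ _ hc
    have h0 : y - y = (0 : PVert d) := by ring
    rwa [h0] at hres
  · rintro ⟨b, hb, hc⟩
    refine ⟨b + y, by simpa using hb, ?_⟩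
    have hlift : ∀ u v : PVert d, (u ∈ box d m ∧ v ∈ box d m
        ∧ openAdj (fun f => ω (eshift y f)) u v) →
        ((u + y) ∈ {u | supNorm (u - y) ≤ m} ∧ (v + y) ∈ {u | supNorm (u - y) ≤ m}
          ∧ openAdj ω (u + y) (v + y)) := by
      rintro u v ⟨hu, hv, hadj⟩
      rw [openAdj_shift] at hadj
      refine ⟨by simpa [_root_.box] using hu, by simpa [_root_.box] using hv, hadj⟩
    have hres : connIn ω {u | supNorm (u - y) ≤ m} ((0 : PVert d) + y) (b + y) :=
      Relation.ReflTransGen.lift (p := fun a b => a ∈ {u | supNorm (u - y) ≤ m} ∧ b ∈ {u | supNorm (u - y) ≤ m} ∧ openAdj ω a b) (f := fun u => u + y) (fun a b h => hlift a b h) _ _ hc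
    have h0 : (0 : PVert d) + y = y := by ring
    rwa [h0] at hres

lemma mem_image_vshift {V : Finset (PVert d)} {y u : PVert d} :
    u ∈ V.image (· + y) ↔ u - y ∈ V := by
  rw [Finset.mem_image]
  constructor
  · rintro ⟨v, hv, rfl⟩
    simpa using hv
  · intro h
    exact ⟨u - y, h, by ring⟩

lemma edgesIn_image_vshift (y : PVert d) (V : Finset (PVert d)) :
    edgesIn d (V.image (· + y)) = (edgesIn d V).image (eshift y) := by
  ext f
  rw [mem_edgesIn_iff, mem_image_vshift, mem_image_vshift]
  constructor
  · rintro ⟨h1, h2⟩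
    rw [Finset.mem_image]
    refine ⟨(f.1 - y, f.2), ?_, ?_⟩
    · rw [mem_edgesIn_iff]
      refine ⟨h1, ?_⟩
      simpa using (by rw [show f.1 - y + unitVec d f.2 = f.1 + unitVec d f.2 - y by ring]; exact h2)
    · unfold eshift
      simp only []
      refine Prod.ext ?_ rfl
      show f.1 - y + y = f.1
      ring
  · intro h
    obtain ⟨g, hg, rfl⟩ := Finset.mem_image.mp h
    rw [mem_edgesIn_iff] at hg
    unfold eshift
    simp only []
    constructor
    · simpa using hg.1
    · rw [show g.1 + y + unitVec d g.2 - y = g.1 + unitVec d g.2 by ring]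
      exact hg.2

lemma transBdryEvent_depOn (m : ℕ) (y : PVert d) :
    DepOn (transBdryEvent d m y) (edgesIn d ((boxF d m).image (· + y))) := by
  have hmem : ∀ u : PVert d, u ∈ (boxF d m).image (· + y) ↔ supNorm (u - y) ≤ m := by
    intro u
    rw [mem_image_vshift, mem_boxF_iff]
  intro ω ω' hag
  constructor <;> rintro ⟨z, hz, hc⟩ <;> refine ⟨z, hz, ?_⟩ <;>
    refine connIn_congr_cfg ?_ hc <;> intro f h1 h2
  · exact hag f (mem_edgesIn_iff.mpr ⟨(hmem f.1).mpr h1, (hmem _).mpr h2⟩)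
  · exact (hag f (mem_edgesIn_iff.mpr ⟨(hmem f.1).mpr h1, (hmem _).mpr h2⟩)).symm

/-- Probability of reaching sup-distance `m` from `y` equals `θ_m`. -/
lemma prob_transBdryEvent {n m : ℕ} {y : PVert d} (hy : supNorm y + m ≤ n) :
    cylProb d p (boxEdges d n) (transBdryEvent d m y) = theta d p m := by
  have hsub : edgesIn d ((boxF d m).image (· + y)) ⊆ boxEdges d n := by
    intro f hf
    rw [mem_edgesIn_iff] at hf
    rw [mem_boxEdges_iff]
    have hb : ∀ u : PVert d, u ∈ (boxF d m).image (· + y) → supNorm u ≤ n := by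
      intro u hu
      rw [mem_image_vshift, mem_boxF_iff] at hu
      calc supNorm u ≤ supNorm (u - y) + supNorm y := by
            have h2 : u = (u - y) + y := by ring
            calc supNorm u = supNorm ((u - y) + y) := congrArg supNorm h2
              _ ≤ supNorm (u - y) + supNorm y := supNorm_add_le _ _
        _ ≤ n := by omega
    exact ⟨hb _ hf.1, hb _ hf.2⟩
  rw [cylProb_depOn_congr hsub (transBdryEvent_depOn m y)]
  rw [edgesIn_image_vshift]
  have : cylProb d p ((edgesIn d (boxF d m)).image (eshift y)) (transBdryEvent d m y)
      = cylProb d p ((edgesIn d (boxF d m)).image (eshift y))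
          (fun ω => zeroToBoundary d m (fun f => ω (eshift y f))) :=
    cylProb_congr fun ω => transBdryEvent_iff_shift m y ω
  rw [this]
  exact cylProb_shift y (edgesIn d (boxF d m)) (zeroToBoundary d m)

end ShiftEvents

section Cluster
set_option maxHeartbeats 1000000
set_option synthInstance.maxHeartbeats 400000

open Finset

variable {d : ℕ} {p : ℝ}

/-- The open cluster of the origin within `S`. -/
noncomputable def clusterOf (d : ℕ) (S : Finset (PVert d)) (ω : PConfig d) : Finset (PVert d) :=
  S.filter (fun v => connIn ω ↑S 0 v)

lemma mem_clusterOf {S : Finset (PVert d)} {ω : PConfig d} {v : PVert d} :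
    v ∈ clusterOf d S ω ↔ v ∈ S ∧ connIn ω ↑S 0 v := by
  unfold clusterOf; rw [Finset.mem_filter]

lemma clusterOf_subset {S : Finset (PVert d)} {ω : PConfig d} :
    clusterOf d S ω ⊆ S := Finset.filter_subset _ _

lemma zero_mem_clusterOf {S : Finset (PVert d)} {ω : PConfig d} (h0S : 0 ∈ S) :
    0 ∈ clusterOf d S ω := mem_clusterOf.mpr ⟨h0S, Relation.ReflTransGen.refl⟩

lemma clusterOf_closed {S : Finset (PVert d)} {ω : PConfig d} {v w : PVert d}
    (hv : v ∈ clusterOf d S ω) (hw : w ∈ S) (hadj : openAdj ω v w) :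
    w ∈ clusterOf d S ω := by
  rw [mem_clusterOf] at hv ⊢
  exact ⟨hw, hv.2.tail ⟨by exact_mod_cast hv.1, by exact_mod_cast hw, hadj⟩⟩

/-- Any path within `S` starting from the cluster of the origin stays in the cluster. -/
lemma connIn_in_cluster {S : Finset (PVert d)} {ω : PConfig d} {a v : PVert d}
    (h : connIn ω ↑S a v) (h0a : connIn ω ↑S 0 a) :
    connIn ω ↑(clusterOf d S ω) a v := by
  revert h0a
  induction h using Relation.ReflTransGen.head_induction_on with
  | refl => exact fun _ => Relation.ReflTransGen.refl
  | head hstep htail ih =>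
    rename_i x c
    obtain ⟨hxS, hcS, hadj⟩ := hstep
    intro h0x
    have h0c : connIn ω ↑S 0 c := h0x.tail ⟨hxS, hcS, hadj⟩
    have hxm : x ∈ clusterOf d S ω := mem_clusterOf.mpr ⟨by exact_mod_cast hxS, h0x⟩
    have hcm : c ∈ clusterOf d S ω := mem_clusterOf.mpr ⟨by exact_mod_cast hcS, h0c⟩
    exact Relation.ReflTransGen.head
      ⟨by exact_mod_cast hxm, by exact_mod_cast hcm, hadj⟩ (ih h0c)

/-- Edges of `S` with an endpoint in `C`. -/
def touchEdges (d : ℕ) (S C : Finset (PVert d)) : Finset (PEdge d) :=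
  (edgesIn d S).filter (fun f => f.1 ∈ C ∨ f.1 + unitVec d f.2 ∈ C)

lemma clusterOf_cross_closed {S : Finset (PVert d)} {ω : PConfig d} {f : PEdge d}
    (hf : f ∈ edgesIn d S)
    (hcr : ¬ (f.1 ∈ clusterOf d S ω ↔ f.1 + unitVec d f.2 ∈ clusterOf d S ω)) :
    ω f = false := by
  rw [mem_edgesIn_iff] at hf
  by_contra hopen
  rw [Bool.not_eq_false] at hopen
  have hadj := openAdj_of_edge hopen
  by_cases h1 : f.1 ∈ clusterOf d S ω
  · exact (by tauto : f.1 + unitVec d f.2 ∉ clusterOf d S ω)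
      (clusterOf_closed h1 hf.2 hadj)
  · have h2 : f.1 + unitVec d f.2 ∈ clusterOf d S ω := by tauto
    exact h1 (clusterOf_closed h2 hf.1 (openAdj_symm hadj))

lemma clusterOf_eq_of_agree {S C : Finset (PVert d)} {ω ω' : PConfig d} (h0S : 0 ∈ S)
    (hag : ∀ f ∈ touchEdges d S C, ω f = ω' f)
    (hC : clusterOf d S ω = C) : clusterOf d S ω' = C := by
  have hCS : C ⊆ S := hC ▸ clusterOf_subset
  have h0C : 0 ∈ C := hC ▸ zero_mem_clusterOf h0S
  -- crossing edges are closed in both configurations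
  have hclosed : ∀ f ∈ edgesIn d S, ¬ (f.1 ∈ C ↔ f.1 + unitVec d f.2 ∈ C) →
      ω f = false ∧ ω' f = false := by
    intro f hf hcr
    have h1 : ω f = false := clusterOf_cross_closed hf (by rw [hC]; exact hcr)
    have h2 : ω f = ω' f := by
      apply hag
      unfold touchEdges
      rw [Finset.mem_filter]
      exact ⟨hf, by tauto⟩
    exact ⟨h1, h2 ▸ h1⟩
  -- transfer of cluster membership
  have hmemto : ∀ v ∈ C, connIn ω' ↑S 0 v := by
    intro v hv
    have hv' : v ∈ clusterOf d S ω := hC ▸ hv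
    have hpath : connIn ω ↑(clusterOf d S ω) 0 v :=
      connIn_in_cluster (mem_clusterOf.mp hv').2 Relation.ReflTransGen.refl
    rw [hC] at hpath
    have hpath' : connIn ω' ↑C 0 v := by
      refine connIn_congr_cfg ?_ hpath
      intro f h1 h2
      apply hag
      unfold touchEdges
      rw [Finset.mem_filter, mem_edgesIn_iff]
      simp only [Finset.mem_coe] at h1 h2
      exact ⟨⟨hCS h1, hCS h2⟩, Or.inl h1⟩
    exact connIn_mono_set (by exact_mod_cast Finset.coe_subset.mpr hCS) hpath'
  have hmemfrom : ∀ v ∈ S, v ∉ C → ¬ connIn ω' ↑S 0 v := by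
    intro v hvS hvC hconn
    obtain ⟨u, w, huC, hwC, huS, hwS, hadj⟩ :=
      connIn_crossing hconn (by exact_mod_cast h0C) (by exact_mod_cast hvC)
    obtain ⟨f, hfopen, hfend⟩ := openAdj_edge hadj
    simp only [Finset.mem_coe] at huC hwC huS hwS
    have hfS : f ∈ edgesIn d S := by
      rw [mem_edgesIn_iff]
      rcases hfend with ⟨h1, h2⟩ | ⟨h1, h2⟩ <;> [exact ⟨h1 ▸ huS, h2 ▸ hwS⟩;
        exact ⟨h1 ▸ hwS, h2 ▸ huS⟩]
    have hcr : ¬ (f.1 ∈ C ↔ f.1 + unitVec d f.2 ∈ C) := by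
      rcases hfend with ⟨h1, h2⟩ | ⟨h1, h2⟩ <;> rw [h2, h1] <;> tauto
    rw [(hclosed f hfS hcr).2] at hfopen
    exact absurd hfopen (by simp)
  ext x
  rw [mem_clusterOf]
  constructor
  · rintro ⟨hxS, hconn⟩
    by_contra hxC
    exact hmemfrom x hxS hxC hconn
  · intro hxC
    exact ⟨hCS hxC, hmemto x hxC⟩

lemma clusterOf_depOn (S C : Finset (PVert d)) (h0S : 0 ∈ S) :
    DepOn (fun ω => clusterOf d S ω = C) (touchEdges d S C) := by
  intro ω ω' hag
  exact ⟨clusterOf_eq_of_agree h0S hag,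
    clusterOf_eq_of_agree h0S (fun f hf => (hag f hf).symm)⟩

end Cluster

section SimonLieb
set_option maxHeartbeats 1600000
set_option synthInstance.maxHeartbeats 400000

open Finset

variable {d : ℕ} {p : ℝ}

lemma cylProb_of_false {E : Finset (PEdge d)} {A : PConfig d → Prop}
    (h : ∀ ω, ¬ A ω) : cylProb d p E A = 0 := by
  rw [cylProb_eq_sum_powerset]
  exact Finset.sum_eq_zero fun s _ => by rw [Ind_false (h _), mul_zero]

lemma DepOn_mono {A : PConfig d → Prop} {E E' : Finset (PEdge d)} (h : E ⊆ E')
    (hA : DepOn A E) : DepOn A E' :=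
  fun ω ω' hag => hA ω ω' (fun e he => hag e (h he))

lemma DepOn_and {A B : PConfig d → Prop} {E₁ E₂ : Finset (PEdge d)}
    (hA : DepOn A E₁) (hB : DepOn B E₂) :
    DepOn (fun ω => A ω ∧ B ω) (E₁ ∪ E₂) := by
  intro ω ω' hag
  have h1 := hA ω ω' (fun e he => hag e (Finset.mem_union_left _ he))
  have h2 := hB ω ω' (fun e he => hag e (Finset.mem_union_right _ he))
  tauto

/-- The tail event: the outer endpoint of the crossing edge reaches `∂Λ_n` off `C`. -/
def slTail (d : ℕ) (n : ℕ) (S C : Finset (PVert d)) (f : PEdge d) (ω : PConfig d) : Prop :=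
  ∃ b, supNorm b = n ∧ connIn ω {u | u ∈ box d n ∧ u ∉ C} (oEnd d S f) b

/-- The first factor: the cluster of the origin in `S` is `C`, containing `x_f`. -/
def slHead (d : ℕ) (S C : Finset (PVert d)) (f : PEdge d) (ω : PConfig d) : Prop :=
  clusterOf d S ω = C ∧ sEnd d S f ∈ C

lemma slTail_depOn (n : ℕ) (S C : Finset (PVert d)) (f : PEdge d) :
    DepOn (slTail d n S C f)
      ((boxEdges d n).filter (fun g => g.1 ∉ C ∧ g.1 + unitVec d g.2 ∉ C)) := by
  intro ω ω' hag
  have key : ∀ g : PEdge d, g.1 ∈ {u | u ∈ box d n ∧ u ∉ C} →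
      g.1 + unitVec d g.2 ∈ {u | u ∈ box d n ∧ u ∉ C} →
      g ∈ (boxEdges d n).filter (fun g => g.1 ∉ C ∧ g.1 + unitVec d g.2 ∉ C) := by
    intro g h1 h2
    simp only [Set.mem_setOf_eq] at h1 h2
    rw [Finset.mem_filter, mem_boxEdges_iff]
    exact ⟨⟨h1.1, h2.1⟩, h1.2, h2.2⟩
  constructor <;> rintro ⟨b, hb, hc⟩ <;> refine ⟨b, hb, connIn_congr_cfg ?_ hc⟩ <;>
    intro g h1 h2
  · exact hag g (key g h1 h2)
  · exact (hag g (key g h1 h2)).symm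

lemma slHead_depOn (S C : Finset (PVert d)) (f : PEdge d) (h0S : 0 ∈ S) :
    DepOn (slHead d S C f) (touchEdges d S C) := by
  intro ω ω' hag
  have := clusterOf_depOn S C h0S ω ω' hag
  unfold slHead
  tauto

/-- Per-term bound in the Simon–Lieb decomposition. -/
lemma sl_term_bound (h0 : 0 ≤ p) (h1 : p ≤ 1) {S : Finset (PVert d)} (h0S : 0 ∈ S)
    {L n : ℕ} (hSL : ∀ x ∈ S, supNorm x ≤ L) (hn : L + 2 ≤ n)
    {f : PEdge d} (hf : f ∈ crossEdges d S) {C : Finset (PVert d)} (hCS : C ⊆ S) :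
    cylProb d p (boxEdges d n)
        (fun ω => slHead d S C f ω ∧ (ω f = true ∧ slTail d n S C f ω))
      ≤ cylProb d p (boxEdges d n) (slHead d S C f) * (p * theta d p (n - (L + 1))) := by
  classical
  set E := boxEdges d n with hE
  set m := n - (L + 1) with hm
  by_cases hxC : sEnd d S f ∈ C
  case neg =>
    have hz : cylProb d p E (fun ω => slHead d S C f ω ∧ (ω f = true ∧ slTail d n S C f ω)) = 0 :=
      cylProb_of_false (fun ω hω => hxC hω.1.2)
    have hz2 : cylProb d p E (slHead d S C f) = 0 :=
      cylProb_of_false (fun ω hω => hxC hω.2)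
    rw [hz, hz2, zero_mul]
  case pos =>
  have hSn : ∀ x ∈ S, supNorm x < n := fun x hx => by have := hSL x hx; omega
  -- the three supports
  set T1 := touchEdges d S C with hT1
  set T2 : Finset (PEdge d) := {f} with hT2
  set T3 := (boxEdges d n).filter (fun g => g.1 ∉ C ∧ g.1 + unitVec d g.2 ∉ C) with hT3
  have hfS : f ∉ edgesIn d S := by
    rw [mem_crossEdges] at hf
    rw [mem_edgesIn_iff]
    tauto
  have hfend : f.1 ∈ C ∨ f.1 + unitVec d f.2 ∈ C := by
    unfold sEnd at hxC
    by_cases h : f.1 ∈ S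
    · rw [if_pos h] at hxC; exact Or.inl hxC
    · rw [if_neg h] at hxC; exact Or.inr hxC
  have hd12 : Disjoint T1 T2 := by
    rw [Finset.disjoint_singleton_right]
    intro hmem
    rw [hT1] at hmem
    unfold touchEdges at hmem
    exact hfS (Finset.mem_filter.mp hmem).1
  have hd13 : Disjoint T1 T3 := by
    rw [Finset.disjoint_left]
    intro g hg1 hg3
    rw [hT1] at hg1
    unfold touchEdges at hg1
    rw [hT3, Finset.mem_filter] at hg3
    rcases (Finset.mem_filter.mp hg1).2 with h | h
    · exact hg3.2.1 h
    · exact hg3.2.2 h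
  have hd23 : Disjoint T2 T3 := by
    rw [Finset.disjoint_singleton_left, hT3, Finset.mem_filter]
    rintro ⟨_, h1, h2⟩
    rcases hfend with h | h
    · exact h1 h
    · exact h2 h
  have hsub1 : T1 ⊆ E := by
    rw [hT1, hE]
    unfold touchEdges boxEdges
    refine (Finset.filter_subset _ _).trans (edgesIn_mono ?_)
    intro x hx
    rw [mem_boxF_iff]
    exact le_of_lt (hSn x hx)
  have hsub2 : T2 ⊆ E := by
    rw [hT2, hE, Finset.singleton_subset_iff]
    exact crossEdges_subset_boxEdges hSn hf
  have hsub3 : T3 ⊆ E := Finset.filter_subset _ _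
  -- dependence
  have hdep1 : DepOn (slHead d S C f) T1 := slHead_depOn S C f h0S
  have hdep2 : DepOn (fun ω => ω f = true) T2 := by
    intro ω ω' hag
    have hh := hag f (Finset.mem_singleton_self f)
    simp only []
    rw [hh]
  have hdep3 : DepOn (slTail d n S C f) T3 := slTail_depOn n S C f
  -- factorize
  have hUsub : T1 ∪ (T2 ∪ T3) ⊆ E :=
    Finset.union_subset hsub1 (Finset.union_subset hsub2 hsub3)
  have hdepU : DepOn (fun ω => slHead d S C f ω ∧ (ω f = true ∧ slTail d n S C f ω))
      (T1 ∪ (T2 ∪ T3)) := DepOn_and hdep1 (DepOn_and hdep2 hdep3)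
  have hfact : cylProb d p E (fun ω => slHead d S C f ω ∧ (ω f = true ∧ slTail d n S C f ω))
      = cylProb d p T1 (slHead d S C f)
        * (cylProb d p T2 (fun ω => ω f = true) * cylProb d p T3 (slTail d n S C f)) := by
    rw [cylProb_depOn_congr hUsub hdepU]
    rw [cylProb_mul_of_depOn (Finset.disjoint_union_right.mpr ⟨hd12, hd13⟩) hdep1
      (DepOn_and hdep2 hdep3)]
    rw [cylProb_mul_of_depOn hd23 hdep2 hdep3]
  -- tail bound
  have hyL : supNorm (oEnd d S f) ≤ L + 1 := by
    have h1 := supNorm_oEnd_le (S := S) f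
    have h2 := hSL _ (sEnd_mem hf)
    omega
  have htail : cylProb d p T3 (slTail d n S C f) ≤ theta d p m := by
    have hup : cylProb d p T3 (slTail d n S C f) = cylProb d p E (slTail d n S C f) :=
      (cylProb_depOn_congr hsub3 hdep3).symm
    rw [hup]
    have hmono : ∀ ω, slTail d n S C f ω → transBdryEvent d m (oEnd d S f) ω := by
      rintro ω ⟨b, hb, hc⟩
      have hc' : connIn ω (box d n) (oEnd d S f) b :=
        connIn_mono_set (fun u hu => hu.1) hc
      have hbd : m ≤ supNorm (b - oEnd d S f) := by
        have : supNorm b ≤ supNorm (b - oEnd d S f) + supNorm (oEnd d S f) := by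
          have heq : b = (b - oEnd d S f) + oEnd d S f := by ring
          calc supNorm b = supNorm ((b - oEnd d S f) + oEnd d S f) := congrArg supNorm heq
            _ ≤ supNorm (b - oEnd d S f) + supNorm (oEnd d S f) := supNorm_add_le _ _
        omega
      have hstart : supNorm (oEnd d S f - oEnd d S f) ≤ m := by
        have : oEnd d S f - oEnd d S f = (0 : PVert d) := by ring
        rw [this, supNorm_zero]
        omega
      obtain ⟨z, hz1, hz2⟩ := connIn_truncate hc' hstart hbd
      exact ⟨z, hz1, hz2⟩
    calc cylProb d p E (slTail d n S C f)
        ≤ cylProb d p E (transBdryEvent d m (oEnd d S f)) := cylProb_mono h0 h1 hmono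
      _ = theta d p m := prob_transBdryEvent (by omega)
  -- assemble
  have hp2 : cylProb d p T2 (fun ω => ω f = true) = p := cylProb_single_edge f
  have hhead : cylProb d p T1 (slHead d S C f) = cylProb d p E (slHead d S C f) :=
    (cylProb_depOn_congr hsub1 hdep1).symm
  rw [hfact, hp2, hhead]
  have h0head : 0 ≤ cylProb d p E (slHead d S C f) := cylProb_nonneg h0 h1 _ _
  have h0tail : 0 ≤ cylProb d p T3 (slTail d n S C f) := cylProb_nonneg h0 h1 _ _
  exact mul_le_mul_of_nonneg_left (mul_le_mul_of_nonneg_left htail h0) h0head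

/-- The Simon–Lieb inequality. -/
lemma simon_lieb (h0 : 0 ≤ p) (h1 : p ≤ 1) {S : Finset (PVert d)} (h0S : 0 ∈ S)
    {L n : ℕ} (hSL : ∀ x ∈ S, supNorm x ≤ L) (hn : L + 2 ≤ n) :
    theta d p n ≤ phiS d p S * theta d p (n - (L + 1)) := by
  classical
  set E := boxEdges d n with hE
  set m := n - (L + 1) with hm
  set u := crossEdges d S ×ˢ S.powerset with hu
  -- decomposition of the event
  have hincl : ∀ ω, zeroToBoundary d n ω → ∃ fc ∈ u,
      (fun fc : PEdge d × Finset (PVert d) => slHead d S fc.2 fc.1 ω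
        ∧ (ω fc.1 = true ∧ slTail d n S fc.2 fc.1 ω)) fc := by
    rintro ω ⟨b, hbn, hc⟩
    set C0 := clusterOf d S ω with hC0
    have hC0S : C0 ⊆ S := clusterOf_subset
    have h0C0 : (0 : PVert d) ∈ (↑C0 : Set (PVert d)) := by
      exact_mod_cast zero_mem_clusterOf h0S
    have hbC0 : b ∉ (↑C0 : Set (PVert d)) := by
      intro hmem
      simp only [Finset.mem_coe] at hmem
      have := hSL b (hC0S hmem)
      omega
    obtain ⟨z, w, hzC, hwC, hzU, hwU, hadj, hsuffix⟩ := connIn_last_exit hc h0C0 hbC0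
    simp only [Finset.mem_coe] at hzC hwC
    have hzS : z ∈ S := hC0S hzC
    have hwS : w ∉ S := by
      intro hwS
      exact hwC (clusterOf_closed hzC hwS hadj)
    obtain ⟨g, hgopen, hgend⟩ := openAdj_edge hadj
    have hgcross : g ∈ crossEdges d S := by
      rw [mem_crossEdges]
      rcases hgend with ⟨e1, e2⟩ | ⟨e1, e2⟩
      · rw [e2, e1]; tauto
      · rw [e2, e1]; tauto
    have hsend : sEnd d S g = z := by
      unfold sEnd
      rcases hgend with ⟨e1, e2⟩ | ⟨e1, e2⟩
      · rw [if_pos (e1 ▸ hzS), e1]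
      · rw [if_neg (e1 ▸ hwS), e2]
    have hoend : oEnd d S g = w := by
      unfold oEnd
      rcases hgend with ⟨e1, e2⟩ | ⟨e1, e2⟩
      · rw [if_pos (e1 ▸ hzS), e2]
      · rw [if_neg (e1 ▸ hwS), e1]
    refine ⟨(g, C0), ?_, ?_, hgopen, ?_⟩
    · rw [hu, Finset.mem_product, Finset.mem_powerset]
      exact ⟨hgcross, hC0S⟩
    · exact ⟨rfl, by rw [hsend]; exact hzC⟩
    · refine ⟨b, hbn, ?_⟩
      rw [hoend]
      refine connIn_mono_set ?_ hsuffix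
      intro x hx
      simp only [Set.mem_setOf_eq] at hx ⊢
      exact ⟨hx.1, by simpa using hx.2⟩
  have step1 : theta d p n ≤ ∑ fc ∈ u, cylProb d p E
      (fun ω => slHead d S fc.2 fc.1 ω ∧ (ω fc.1 = true ∧ slTail d n S fc.2 fc.1 ω)) := by
    exact cylProb_le_sum h0 h1 hincl
  have hθm0 : 0 ≤ theta d p m := cylProb_nonneg h0 h1 _ _
  have step2 : ∑ fc ∈ u, cylProb d p E
        (fun ω => slHead d S fc.2 fc.1 ω ∧ (ω fc.1 = true ∧ slTail d n S fc.2 fc.1 ω))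
      ≤ ∑ fc ∈ u, cylProb d p E (slHead d S fc.2 fc.1) * (p * theta d p m) := by
    refine Finset.sum_le_sum fun fc hfc => ?_
    rw [hu, Finset.mem_product, Finset.mem_powerset] at hfc
    exact sl_term_bound h0 h1 h0S hSL hn hfc.1 hfc.2
  have step3 : ∑ fc ∈ u, cylProb d p E (slHead d S fc.2 fc.1) * (p * theta d p m)
      = ∑ f ∈ crossEdges d S, (∑ C ∈ S.powerset, cylProb d p E (slHead d S C f))
          * (p * theta d p m) := by
    rw [hu, Finset.sum_product]
    refine Finset.sum_congr rfl fun f hf => ?_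
    rw [Finset.sum_mul]
  have step4 : ∀ f ∈ crossEdges d S, ∑ C ∈ S.powerset, cylProb d p E (slHead d S C f)
      ≤ cylProb d p (edgesIn d S) (fun ω => connIn ω ↑S 0 (sEnd d S f)) := by
    intro f hf
    have hle : ∑ C ∈ S.powerset, cylProb d p E (slHead d S C f)
        ≤ cylProb d p E (fun ω => connIn ω ↑S 0 (sEnd d S f)) := by
      refine sum_le_cylProb h0 h1 ?_ ?_
      · rintro C _ ω ⟨hCl, hxC⟩
        have : sEnd d S f ∈ clusterOf d S ω := hCl ▸ hxC
        exact (mem_clusterOf.mp this).2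
      · rintro C _ C' _ hne ω ⟨h1', _⟩ ⟨h2', _⟩
        exact hne (h1' ▸ h2' ▸ rfl)
    have heq : cylProb d p E (fun ω => connIn ω ↑S 0 (sEnd d S f))
        = cylProb d p (edgesIn d S) (fun ω => connIn ω ↑S 0 (sEnd d S f)) := by
      refine cylProb_depOn_congr ?_ (connInS_depOn S _ _)
      rw [hE]
      unfold boxEdges
      refine edgesIn_mono ?_
      intro x hx
      rw [mem_boxF_iff]
      have := hSL x hx
      omega
    rw [← heq]
    exact hle
  have step5 : ∑ f ∈ crossEdges d S, (∑ C ∈ S.powerset, cylProb d p E (slHead d S C f))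
        * (p * theta d p m)
      ≤ ∑ f ∈ crossEdges d S,
          cylProb d p (edgesIn d S) (fun ω => connIn ω ↑S 0 (sEnd d S f))
            * (p * theta d p m) := by
    refine Finset.sum_le_sum fun f hf => ?_
    refine mul_le_mul_of_nonneg_right (step4 f hf) ?_
    positivity
  have step6 : ∑ f ∈ crossEdges d S,
        cylProb d p (edgesIn d S) (fun ω => connIn ω ↑S 0 (sEnd d S f)) * (p * theta d p m)
      = phiS d p S * theta d p m := by
    unfold phiS
    rw [Finset.sum_mul]
    refine Finset.sum_congr rfl fun f hf => ?_
    ring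
  calc theta d p n ≤ _ := step1
    _ ≤ _ := step2
    _ = _ := step3
    _ ≤ _ := step5
    _ = phiS d p S * theta d p m := step6

end SimonLieb

section Final
set_option maxHeartbeats 1000000
set_option synthInstance.maxHeartbeats 400000

open Finset

variable {d : ℕ} {p : ℝ}

lemma phiS_nonneg (h0 : 0 ≤ p) (h1 : p ≤ 1) (S : Finset (PVert d)) : 0 ≤ phiS d p S := by
  unfold phiS
  exact Finset.sum_nonneg fun f _ => mul_nonneg h0 (cylProb_nonneg h0 h1 _ _)

lemma theta_iter (h0 : 0 ≤ p) (h1 : p ≤ 1) {S : Finset (PVert d)} (h0S : 0 ∈ S)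
    {L : ℕ} (hSL : ∀ x ∈ S, supNorm x ≤ L) :
    ∀ k : ℕ, theta d p (L + 2 + k * (L + 1)) ≤ phiS d p S ^ k := by
  intro k
  induction k with
  | zero =>
    simpa [theta] using cylProb_le_one h0 h1 (boxEdges d (L + 2)) (zeroToBoundary d (L + 2))
  | succ k ih =>
    have harith : (L + 2 + (k + 1) * (L + 1)) - (L + 1) = L + 2 + k * (L + 1) := by
      have h : (k + 1) * (L + 1) = k * (L + 1) + (L + 1) := by ring
      omega
    have hn : L + 2 ≤ L + 2 + (k + 1) * (L + 1) := Nat.le_add_right _ _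
    have hsl := simon_lieb h0 h1 h0S hSL hn
    rw [harith] at hsl
    calc theta d p (L + 2 + (k + 1) * (L + 1))
        ≤ phiS d p S * theta d p (L + 2 + k * (L + 1)) := hsl
      _ ≤ phiS d p S * phiS d p S ^ k :=
          mul_le_mul_of_nonneg_left ih (phiS_nonneg h0 h1 S)
      _ = phiS d p S ^ (k + 1) := by ring

lemma probZeroToInfty_eq_zero_of_mem_Qset (hq : p ∈ Qset d) : probZeroToInfty d p = 0 := by
  obtain ⟨⟨h0, h1⟩, S, h0S, hphi⟩ := hq
  set L := S.sup supNorm with hL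
  have hSL : ∀ x ∈ S, supNorm x ≤ L := fun x hx => Finset.le_sup hx
  have hiter := theta_iter h0 h1 h0S hSL
  have hbdd : BddBelow (Set.range fun n => theta d p n) := by
    refine ⟨0, ?_⟩
    rintro x ⟨n, rfl⟩
    exact cylProb_nonneg h0 h1 _ _
  have hge : 0 ≤ probZeroToInfty d p := by
    unfold probZeroToInfty
    exact le_ciInf fun n => cylProb_nonneg h0 h1 _ _
  have hle : probZeroToInfty d p ≤ 0 := by
    by_contra hcon
    push_neg at hcon
    have hphi0 : 0 ≤ phiS d p S := phiS_nonneg h0 h1 S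
    obtain ⟨k, hk⟩ := exists_pow_lt_of_lt_one hcon hphi
    have h2 : probZeroToInfty d p ≤ theta d p (L + 2 + k * (L + 1)) := by
      unfold probZeroToInfty
      exact ciInf_le hbdd _
    have := hiter k
    linarith
  linarith

lemma pCrit_bddAbove (d : ℕ) :
    BddAbove {p : ℝ | p ∈ Set.Icc (0 : ℝ) 1 ∧ probZeroToInfty d p = 0} :=
  ⟨1, fun q hq => hq.1.2⟩

lemma ptc_le_pCrit (d : ℕ) : ptc d ≤ pCrit d := by
  unfold ptc pCrit
  refine csSup_le ⟨0, zero_mem_Qset d⟩ ?_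
  intro q hq
  refine le_csSup (pCrit_bddAbove d) ?_
  exact ⟨hq.1, probZeroToInfty_eq_zero_of_mem_Qset hq⟩

lemma pCrit_lt_imp {d : ℕ} {q : ℝ} (h : pCrit d < q) : ptc d < q :=
  lt_of_le_of_lt (ptc_le_pCrit d) h

end Final

/-- **Sharpness of the phase transition: mean-field lower bound.**  For Bernoulli bond
percolation on `ℤ^d` (`d ≥ 1`), there is `c > 0` such that `ℙ_p[0 ↔ ∞] ≥ c(p − p_c)`
for every `p > p_c`. -/
theorem mean_field_lower_bound (d : ℕ) (hd : 1 ≤ d) :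
    ∃ c : ℝ, 0 < c ∧ ∀ p : ℝ, p ≤ 1 → pCrit d < p →
      c * (p - pCrit d) ≤ probZeroToInfty d p := by
  refine ⟨1 - Real.exp (-1), ?_, ?_⟩
  · have : Real.exp (-1) < Real.exp 0 := Real.exp_lt_exp.mpr (by norm_num)
    rw [Real.exp_zero] at this
    linarith
  · intro p hp1 hpc
    have hptc : ptc d < p := pCrit_lt_imp hpc
    have hbound := probZeroToInfty_ge_of_gt_ptc hptc hp1
    have hu0 : 0 ≤ p - ptc d := le_of_lt (sub_pos.mpr hptc)
    have hu1 : p - ptc d ≤ 1 := by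
      have := ptc_nonneg d
      linarith
    have hlin := linearize_exp hu0 hu1
    have hexp : Real.exp (ptc d - p) = Real.exp (-(p - ptc d)) := by ring_nf
    have hc0 : (0 : ℝ) ≤ 1 - Real.exp (-1) := by
      have : Real.exp (-1) < Real.exp 0 := Real.exp_lt_exp.mpr (by norm_num)
      rw [Real.exp_zero] at this
      linarith
    have hple : pCrit d ≥ ptc d := ptc_le_pCrit d
    calc (1 - Real.exp (-1)) * (p - pCrit d)
        ≤ (1 - Real.exp (-1)) * (p - ptc d) := by nlinarith
      _ ≤ 1 - Real.exp (-(p - ptc d)) := hlin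
      _ = 1 - Real.exp (ptc d - p) := by rw [← hexp]
      _ ≤ probZeroToInfty d p := hbound
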